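/- arXiv:2309.06554 — 3 statements merged into one kernel-verified Lean document; each statement's English description precedes it below -/
import Mathlib

section
/- Let k ≥ 1 and 0 ≤ ℓ ≤ k be integers. Then the type-B Eulerian number ⟨B_k, ℓ⟩ satisfies ⟨B_k, ℓ⟩ = Σ_{j=0}^{ℓ} (−1)^j · binom(k+1, j) · (2(ℓ−j)+1)^k. -/
/-- Extension of `w : Fin k → ℤ` to `ℕ` with a leading zero: `wext w 0 = 0` and
`wext w j = w (j-1)` for `1 ≤ j ≤ k` (and `0` beyond). -/
def wext {k : ℕ} (w : Fin k → ℤ) : ℕ → ℤ := fun j =>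
  if h : j - 1 < k ∧ 1 ≤ j then w ⟨j - 1, h.1⟩ else 0

/-- `w : Fin k → ℤ` is a signed permutation of length `k`: `w z = s z · σ z` for a
permutation `σ` of `{1, …, k}` and signs `s z ∈ {−1, 1}`. -/
def IsSignedPerm {k : ℕ} (w : Fin k → ℤ) : Prop :=
  ∃ σ : Equiv.Perm (Fin k),
    ∀ z, w z = ((σ z : ℕ) : ℤ) + 1 ∨ w z = -(((σ z : ℕ) : ℤ) + 1)

/-- The number of descents of a signed permutation, with a leading zero: the number of
indices `z ∈ {0, …, k-1}` with `w z > w (z+1)` where `w 0 = 0` (1-indexed). -/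
noncomputable def signedDescentCount {k : ℕ} (w : Fin k → ℤ) : ℕ :=
  Nat.card {z : ℕ // z < k ∧ wext w (z + 1) < wext w z}

/-- The type-B Eulerian number `⟨B_k, ℓ⟩`: the number of signed permutations of length
`k` with exactly `ℓ` descents. -/
noncomputable def eulerianBNum (k ℓ : ℕ) : ℕ :=
  Nat.card {w : Fin k → ℤ // IsSignedPerm w ∧ signedDescentCount w = ℓ}


set_option maxRecDepth 4000

namespace Stmt16A
open Finset
abbrev SP (k : ℕ) := Equiv.Perm (Fin k) × (Fin k → Bool)

def wOf {k : ℕ} (p : SP k) : Fin k → ℤ := fun z =>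
  if p.2 z then ((p.1 z : ℕ) : ℤ) + 1 else -(((p.1 z : ℕ) : ℤ) + 1)


lemma isSignedPerm_wOf {k : ℕ} (p : SP k) : IsSignedPerm (wOf p) := by
  refine ⟨p.1, fun z => ?_⟩
  unfold wOf
  split <;> simp

lemma wOf_injective {k : ℕ} : Function.Injective (wOf (k := k)) := by
  rintro ⟨σ, s⟩ ⟨τ, t⟩ h
  have key : ∀ z, σ z = τ z ∧ s z = t z := by
    intro z
    have hz := congrFun h z
    simp only [wOf] at hz
    have h1 : ((σ z : ℕ) : ℤ) + 1 > 0 := by positivity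
    have h2 : ((τ z : ℕ) : ℤ) + 1 > 0 := by positivity
    constructor
    · have : ((σ z : ℕ) : ℤ) = ((τ z : ℕ) : ℤ) := by
        rcases Bool.eq_false_or_eq_true (s z) with hs | hs <;>
        rcases Bool.eq_false_or_eq_true (t z) with ht | ht <;>
          simp [hs, ht] at hz <;> omega
      exact Fin.ext (by exact_mod_cast this)
    · rcases Bool.eq_false_or_eq_true (s z) with hs | hs <;>
      rcases Bool.eq_false_or_eq_true (t z) with ht | ht <;>
        simp [hs, ht] at hz ⊢ <;> omega
  have h1 : σ = τ := Equiv.ext fun z => (key z).1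
  have h2 : s = t := funext fun z => (key z).2
  simp [h1, h2]

lemma exists_wOf {k : ℕ} (w : Fin k → ℤ) (hw : IsSignedPerm w) : ∃ p : SP k, wOf p = w := by
  obtain ⟨σ, hσ⟩ := hw
  refine ⟨⟨σ, fun z => decide (0 < w z)⟩, funext fun z => ?_⟩
  rcases hσ z with h | h <;>
  · simp only [wOf]
    rw [h]
    norm_num
    try omega



open Finset

variable {k m : ℕ}

/-- value of `f` shifted to `[-m, m]` -/
def vf (m : ℕ) {k : ℕ} (f : Fin k → Fin (2 * m + 1)) (j : Fin k) : ℤ := (f j : ℤ) - m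

/-- tie-breaking offset -/
def offv (k : ℕ) (a : ℤ) (i : Fin k) : ℤ :=
  if a < 0 then (k : ℤ) - (i : ℕ) else (k : ℤ) + 1 + (i : ℕ)

/-- sorting key -/
def keyv (k : ℕ) (a : ℤ) (i : Fin k) : ℤ := (2 * k + 1) * |a| + offv k a i

/-- signed letter -/
def wv (a : ℤ) {k : ℕ} (i : Fin k) : ℤ :=
  if 0 ≤ a then ((i : ℕ) : ℤ) + 1 else -(((i : ℕ) : ℤ) + 1)

lemma offv_bounds (a : ℤ) (i : Fin k) : 1 ≤ offv k a i ∧ offv k a i ≤ 2 * k := by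
  have := i.isLt
  unfold offv
  split <;> constructor <;> push_cast <;> omega

lemma offv_lt_iff_wv_lt (a b : ℤ) (i i' : Fin k) :
    offv k a i < offv k b i' ↔ wv a i < wv b i' := by
  have hi := i.isLt
  have hi' := i'.isLt
  unfold offv wv
  split_ifs with h1 h2 h2 <;> push_cast <;> omega

lemma keyv_lt_iff (a b : ℤ) (i i' : Fin k) :
    keyv k a i < keyv k b i' ↔ (|a| < |b| ∨ (|a| = |b| ∧ wv a i < wv b i')) := by
  have h1 := offv_bounds a i
  have h2 := offv_bounds b i'
  rw [← offv_lt_iff_wv_lt]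
  unfold keyv
  constructor
  · intro h
    rcases lt_trichotomy |a| |b| with hab | hab | hab
    · exact Or.inl hab
    · exact Or.inr ⟨hab, by rw [hab] at h; linarith⟩
    · exfalso
      have : (2 * (k : ℤ) + 1) * (|b| + 1) ≤ (2 * k + 1) * |a| :=
        mul_le_mul_of_nonneg_left (by omega) (by positivity)
      linarith
  · rintro (hab | ⟨hab, hoff⟩)
    · have : (2 * (k : ℤ) + 1) * (|a| + 1) ≤ (2 * k + 1) * |b| :=
        mul_le_mul_of_nonneg_left (by omega) (by positivity)
      linarith
    · rw [hab]; linarith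

lemma wv_ne (a b : ℤ) {i i' : Fin k} (h : i ≠ i') : wv a i ≠ wv b i' := by
  have hne : ((i : ℕ) : ℤ) ≠ ((i' : ℕ) : ℤ) := by
    simpa using fun hc => h (Fin.ext (by exact_mod_cast hc))
  unfold wv
  split_ifs <;> omega

lemma keyv_inj {a b : ℤ} {i i' : Fin k} (h : keyv k a i = keyv k b i') : i = i' := by
  by_contra hne
  rcases lt_trichotomy (wv a i) (wv b i') with hw | hw | hw
  · have habs : |a| ≤ |b| := by
      by_contra hab
      have := (keyv_lt_iff b a i' i).2 (Or.inl (by omega))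
      omega
    rcases eq_or_lt_of_le habs with hab | hab
    · have := (keyv_lt_iff a b i i').2 (Or.inr ⟨hab, hw⟩); omega
    · have := (keyv_lt_iff a b i i').2 (Or.inl hab); omega
  · exact wv_ne a b hne hw
  · have habs : |b| ≤ |a| := by
      by_contra hab
      have := (keyv_lt_iff a b i i').2 (Or.inl (by omega))
      omega
    rcases eq_or_lt_of_le habs with hab | hab
    · have := (keyv_lt_iff b a i' i).2 (Or.inr ⟨hab, hw⟩); omega
    · have := (keyv_lt_iff b a i' i).2 (Or.inl hab); omega


lemma wext_succ {k : ℕ} (w : Fin k → ℤ) {y : ℕ} (hy : y < k) :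
    wext w (y + 1) = w ⟨y, hy⟩ := by
  simp [wext, hy]

lemma wext_zero {k : ℕ} (w : Fin k → ℤ) : wext w 0 = 0 := by simp [wext]

/-- the key function -/
def KK (m : ℕ) {k : ℕ} (f : Fin k → Fin (2 * m + 1)) : Fin k → ℤ :=
  fun j => keyv k (vf m f j) j

def sortP (m : ℕ) {k : ℕ} (f : Fin k → Fin (2 * m + 1)) : Equiv.Perm (Fin k) :=
  Tuple.sort (KK m f)

def st (m : ℕ) {k : ℕ} (f : Fin k → Fin (2 * m + 1)) : SP k :=
  (sortP m f, fun z => decide (0 ≤ vf m f (sortP m f z)))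

lemma vf_abs_le (f : Fin k → Fin (2 * m + 1)) (j : Fin k) : (vf m f j).natAbs ≤ m := by
  have := (f j).isLt
  unfold vf
  omega

def cF (m : ℕ) {k : ℕ} (f : Fin k → Fin (2 * m + 1)) : Fin k → Fin (m + 1) :=
  fun z => ⟨(vf m f (sortP m f z)).natAbs, Nat.lt_succ_of_le (vf_abs_le f _)⟩

lemma KK_inj (f : Fin k → Fin (2 * m + 1)) : Function.Injective (KK m f) :=
  fun _ _ h => keyv_inj h

lemma strictMono_KK_sort (f : Fin k → Fin (2 * m + 1)) :
    StrictMono (KK m f ∘ sortP m f) :=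
  (Tuple.monotone_sort (KK m f)).strictMono_of_injective
    ((KK_inj f).comp (Equiv.injective _))

lemma wOf_st (f : Fin k → Fin (2 * m + 1)) (z : Fin k) :
    wOf (st m f) z = wv (vf m f (sortP m f z)) (sortP m f z) := by
  simp only [wOf, st, wv, decide_eq_true_eq]

def cext {k m : ℕ} (c : Fin k → Fin (m + 1)) : ℕ → ℕ := fun j =>
  if h : j - 1 < k ∧ 1 ≤ j then (c ⟨j - 1, h.1⟩ : ℕ) else 0

lemma cext_succ {k m : ℕ} (c : Fin k → Fin (m + 1)) {y : ℕ} (hy : y < k) :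
    cext c (y + 1) = c ⟨y, hy⟩ := by
  simp [cext, hy]

lemma cext_zero {k m : ℕ} (c : Fin k → Fin (m + 1)) : cext c 0 = 0 := by simp [cext]

def Adpt {k m : ℕ} (p : SP k) (c : Fin k → Fin (m + 1)) : Prop :=
  ∀ y, y < k → cext c y ≤ cext c (y + 1) ∧
    (wext (wOf p) (y + 1) < wext (wOf p) y → cext c y < cext c (y + 1))

lemma adpt_cF (f : Fin k → Fin (2 * m + 1)) : Adpt (st m f) (cF m f) := by
  intro y hy
  rcases Nat.eq_zero_or_pos y with rfl | hy1
  · rw [wext_zero, cext_zero, wext_succ _ hy, cext_succ _ hy]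
    refine ⟨Nat.zero_le _, fun hd => ?_⟩
    rw [wOf_st] at hd
    have ha : vf m f (sortP m f ⟨0, hy⟩) < 0 := by
      by_contra hc
      unfold wv at hd
      rw [if_pos (by omega)] at hd
      omega
    show 0 < (cF m f ⟨0, hy⟩ : ℕ)
    simp only [cF]
    omega
  · obtain ⟨x, rfl⟩ : ∃ x, y = x + 1 := ⟨y - 1, by omega⟩
    have hx : x < k := by omega
    have hlt : (⟨x, hx⟩ : Fin k) < ⟨x + 1, hy⟩ := by
      simp only [Fin.lt_def]; omega
    have hk := strictMono_KK_sort f hlt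
    simp only [Function.comp, KK] at hk
    rw [keyv_lt_iff] at hk
    set a := vf m f (sortP m f ⟨x, hx⟩) with hadef
    set b := vf m f (sortP m f ⟨x + 1, hy⟩) with hbdef
    have e1 : cext (cF m f) (x + 1) = a.natAbs := by
      rw [cext_succ _ hx]; rfl
    have e2 : cext (cF m f) (x + 1 + 1) = b.natAbs := by
      rw [cext_succ _ hy]; rfl
    have e3 : wext (wOf (st m f)) (x + 1) = wv a (sortP m f ⟨x, hx⟩) := by
      rw [wext_succ _ hx, wOf_st]
    have e4 : wext (wOf (st m f)) (x + 1 + 1) = wv b (sortP m f ⟨x + 1, hy⟩) := by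
      rw [wext_succ _ hy, wOf_st]
    rw [e1, e2, e3, e4]
    have ha1 := Int.abs_eq_natAbs a
    have hb1 := Int.abs_eq_natAbs b
    rcases hk with hk | ⟨hk1, hk2⟩
    · exact ⟨by omega, fun _ => by omega⟩
    · exact ⟨by omega, fun hd => absurd (hd.trans hk2) (lt_irrefl _)⟩

def Phi {k : ℕ} (m : ℕ) (p : SP k) (c : Fin k → Fin (m + 1)) : Fin k → Fin (2 * m + 1) :=
  fun j =>
    if p.2 (p.1.symm j) then ⟨m + (c (p.1.symm j) : ℕ), by have := (c (p.1.symm j)).isLt; omega⟩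
    else ⟨m - (c (p.1.symm j) : ℕ), by omega⟩

lemma Phi_val (p : SP k) (c : Fin k → Fin (m + 1)) (j : Fin k) :
    ((Phi m p c j : ℕ)) =
      if p.2 (p.1.symm j) then m + (c (p.1.symm j) : ℕ) else m - (c (p.1.symm j) : ℕ) := by
  unfold Phi
  split_ifs <;> rfl

lemma Phi_st_cF (f : Fin k → Fin (2 * m + 1)) : Phi m (st m f) (cF m f) = f := by
  funext j
  apply Fin.ext
  have hj := (f j).isLt
  rw [Phi_val]
  simp only [st, cF, decide_eq_true_eq, Equiv.apply_symm_apply]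
  split_ifs with h <;> · simp only [vf] at h ⊢; omega


lemma vf_Phi (p : SP k) (c : Fin k → Fin (m + 1)) (z : Fin k) :
    vf m (Phi m p c) (p.1 z) = if p.2 z then ((c z : ℕ) : ℤ) else -((c z : ℕ) : ℤ) := by
  have hc := (c z).isLt
  unfold vf
  rw [Phi_val]
  simp only [Equiv.symm_apply_apply]
  split_ifs <;> push_cast <;> omega

lemma wOf_neg_iff (p : SP k) (z : Fin k) : wOf p z < 0 ↔ p.2 z = false := by
  unfold wOf
  rcases Bool.eq_false_or_eq_true (p.2 z) with h | h <;> simp [h] <;> omega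

lemma negpos (p : SP k) (c : Fin k → Fin (m + 1)) (h : Adpt p c) :
    ∀ y (hy : y < k), p.2 ⟨y, hy⟩ = false → 1 ≤ (c ⟨y, hy⟩ : ℕ) := by
  intro y
  induction y using Nat.strong_induction_on with
  | _ y ih =>
    intro hy hneg
    have hw : wOf p ⟨y, hy⟩ < 0 := (wOf_neg_iff p _).2 hneg
    have hA := h y hy
    rw [wext_succ _ hy, cext_succ _ hy] at hA
    by_cases hd : wOf p ⟨y, hy⟩ < wext (wOf p) y
    · have := hA.2 hd
      omega
    · rcases Nat.eq_zero_or_pos y with rfl | hy1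
      · rw [wext_zero] at hd; omega
      · obtain ⟨x, rfl⟩ : ∃ x, y = x + 1 := ⟨y - 1, by omega⟩
        have hx : x < k := by omega
        rw [wext_succ _ hx] at hd
        have hwx : wOf p ⟨x, hx⟩ < 0 := by omega
        have := ih x (by omega) hx ((wOf_neg_iff p _).1 hwx)
        rw [cext_succ _ hx] at hA
        omega

lemma wv_eq_wOf (p : SP k) (c : Fin k → Fin (m + 1)) (h : Adpt p c) (z : Fin k) :
    wv (if p.2 z then ((c z : ℕ) : ℤ) else -((c z : ℕ) : ℤ)) (p.1 z) = wOf p z := by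
  unfold wv wOf
  rcases Bool.eq_false_or_eq_true (p.2 z) with hb | hb
  · rw [if_pos hb, if_pos hb, if_pos (Int.natCast_nonneg _)]
  · have h1 : 1 ≤ (c z : ℕ) := negpos p c h z.val z.isLt hb
    simp only [hb, Bool.false_eq_true, if_false]
    rw [if_neg (show ¬ (0:ℤ) ≤ -((c z : ℕ) : ℤ) by omega)]

lemma wOf_inj (p : SP k) {z z' : Fin k} (h : wOf p z = wOf p z') : z = z' := by
  have h1 : p.1 z = p.1 z' := by
    unfold wOf at h
    apply Fin.ext
    split_ifs at h <;> omega
  exact p.1.injective h1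

lemma fin_mono_of_succ {α : Type*} [Preorder α] (g : Fin k → α)
    (h : ∀ y (h1 : y + 1 < k), g ⟨y, Nat.lt_of_succ_lt h1⟩ ≤ g ⟨y + 1, h1⟩) : Monotone g := by
  have key : ∀ n (a : ℕ) (ha : a < k) (hb : a + n < k), g ⟨a, ha⟩ ≤ g ⟨a + n, hb⟩ := by
    intro n
    induction n with
    | zero => intro a ha hb; exact le_refl _
    | succ n ih =>
      intro a ha hb
      exact le_trans (ih a ha (by omega)) (by simpa [Nat.add_assoc] using h (a + n) (by omega))
  rintro ⟨a, ha⟩ ⟨b, hb⟩ hab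
  have : a ≤ b := hab
  simpa [Nat.add_sub_cancel' this] using key (b - a) a ha (by omega)

lemma mono_KK_Phi (p : SP k) (c : Fin k → Fin (m + 1)) (h : Adpt p c) :
    Monotone (KK m (Phi m p c) ∘ p.1) := by
  apply fin_mono_of_succ
  intro y hy1
  have hy : y < k := by omega
  simp only [Function.comp, KK]
  set a := vf m (Phi m p c) (p.1 ⟨y, hy⟩) with ha
  set b := vf m (Phi m p c) (p.1 ⟨y + 1, hy1⟩) with hb
  have hva := vf_Phi p c ⟨y, hy⟩
  have hvb := vf_Phi p c ⟨y + 1, hy1⟩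
  have haabs : |a| = ((c ⟨y, hy⟩ : ℕ) : ℤ) := by
    rw [ha, hva]; split_ifs <;> simp [abs_of_nonneg]
  have hbabs : |b| = ((c ⟨y + 1, hy1⟩ : ℕ) : ℤ) := by
    rw [hb, hvb]; split_ifs <;> simp [abs_of_nonneg]
  have hA := h (y + 1) hy1
  rw [cext_succ _ hy, cext_succ _ hy1, wext_succ _ hy, wext_succ _ hy1] at hA
  rcases lt_or_eq_of_le hA.1 with hlt | heq
  · exact le_of_lt ((keyv_lt_iff _ _ _ _).2 (Or.inl (by omega)))
  · refine le_of_lt ((keyv_lt_iff _ _ _ _).2 (Or.inr ⟨by omega, ?_⟩))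
    have hWa : wv a (p.1 ⟨y, hy⟩) = wOf p ⟨y, hy⟩ := by
      rw [ha, hva]; exact wv_eq_wOf p c h _
    have hWb : wv b (p.1 ⟨y + 1, hy1⟩) = wOf p ⟨y + 1, hy1⟩ := by
      rw [hb, hvb]; exact wv_eq_wOf p c h _
    rw [hWa, hWb]
    have hnd : ¬ (wOf p ⟨y + 1, hy1⟩ < wOf p ⟨y, hy⟩) := fun hd => by
      have := hA.2 hd; omega
    have hne : wOf p ⟨y, hy⟩ ≠ wOf p ⟨y + 1, hy1⟩ := fun hc => by
      have := wOf_inj p hc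
      simp only [Fin.mk.injEq] at this
      omega
    omega

lemma sortP_Phi (p : SP k) (c : Fin k → Fin (m + 1)) (h : Adpt p c) :
    sortP m (Phi m p c) = p.1 := by
  symm
  rw [sortP, Tuple.eq_sort_iff]
  refine ⟨mono_KK_Phi p c h, fun i j hij hKK => ?_⟩
  exact absurd (p.1.injective (KK_inj _ hKK)) (by omega)

set_option maxHeartbeats 1000000 in
lemma st_Phi (p : SP k) (c : Fin k → Fin (m + 1)) (h : Adpt p c) :
    st m (Phi m p c) = p := by
  have hs := sortP_Phi p c h
  refine Prod.ext hs (funext fun z => ?_)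
  show decide (0 ≤ vf m (Phi m p c) (sortP m (Phi m p c) z)) = p.2 z
  rw [hs, vf_Phi]
  rcases Bool.eq_false_or_eq_true (p.2 z) with hb | hb
  · rw [if_pos hb, hb]
    simp
  · have h1 : 1 ≤ (c z : ℕ) := negpos p c h z.val z.isLt hb
    rw [if_neg (by simp [hb]), hb]
    simp only [decide_eq_false_iff_not, not_le]
    omega

set_option maxHeartbeats 1000000 in
lemma cF_Phi (p : SP k) (c : Fin k → Fin (m + 1)) (h : Adpt p c) :
    cF m (Phi m p c) = c := by
  funext z
  apply Fin.ext
  show (vf m (Phi m p c) (sortP m (Phi m p c) z)).natAbs = (c z : ℕ)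
  rw [sortP_Phi p c h, vf_Phi]
  split_ifs <;> omega


def desF {k : ℕ} (w : Fin k → ℤ) : Finset ℕ :=
  (Finset.range k).filter (fun z => wext w (z + 1) < wext w z)

variable (p : SP k)

def dB (p : SP k) (y : ℕ) : ℕ := ((desF (wOf p)).filter (fun x => x < y)).card

lemma mem_desF {y : ℕ} : y ∈ desF (wOf p) ↔ y < k ∧ wext (wOf p) (y + 1) < wext (wOf p) y := by
  simp [desF]

lemma dB_zero : dB p 0 = 0 := by
  simp [dB]

lemma dB_succ (y : ℕ) : dB p (y + 1) = dB p y + (if y ∈ desF (wOf p) then 1 else 0) := by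
  classical
  have hsplit : (desF (wOf p)).filter (fun x => x < y + 1)
      = (desF (wOf p)).filter (fun x => x < y) ∪ (desF (wOf p)).filter (fun x => x = y) := by
    ext x
    by_cases hx : x ∈ desF (wOf p) <;>
      simp only [Finset.mem_filter, Finset.mem_union, hx, true_and, false_and, or_self] <;>
      first
        | omega
        | exact Iff.rfl
  have hdisj : Disjoint ((desF (wOf p)).filter (fun x => x < y))
      ((desF (wOf p)).filter (fun x => x = y)) := by
    rw [Finset.disjoint_left]
    intro x hx1 hx2
    rw [Finset.mem_filter] at hx1
    rw [Finset.mem_filter] at hx2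
    omega
  rw [dB, hsplit, Finset.card_union_of_disjoint hdisj]
  congr 1
  by_cases hy : y ∈ desF (wOf p)
  · rw [if_pos hy]
    have hseq : (desF (wOf p)).filter (fun x => x = y) = {y} := by
      ext x
      simp only [Finset.mem_filter, Finset.mem_singleton]
      exact ⟨fun h => h.2, fun h => ⟨h ▸ hy, h⟩⟩
    rw [hseq, Finset.card_singleton]
  · rw [if_neg hy, Finset.card_eq_zero, Finset.filter_eq_empty_iff]
    rintro x hx rfl
    exact hy hx

lemma dB_le_of_le {y y' : ℕ} (h : y ≤ y') : dB p y ≤ dB p y' :=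
  Finset.card_le_card (Finset.monotone_filter_right _ (fun x _ (hx : x < y) => lt_of_lt_of_le hx h))

lemma dB_k : dB p k = (desF (wOf p)).card := by
  rw [dB]
  congr 1
  apply Finset.filter_true_of_mem
  intro x hx
  exact Finset.mem_range.1 (Finset.mem_filter.1 hx).1

lemma dB_diff (y : ℕ) (hy : y ≤ k) : dB p k ≤ dB p y + (k - y) := by
  have hsub : (desF (wOf p)).filter (fun x => x < k)
      ⊆ (desF (wOf p)).filter (fun x => x < y) ∪ Finset.Ico y k := by
    intro x hx
    rw [Finset.mem_filter] at hx
    rcases lt_or_ge x y with h | h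
    · exact Finset.mem_union_left _ (Finset.mem_filter.2 ⟨hx.1, h⟩)
    · exact Finset.mem_union_right _ (Finset.mem_Ico.2 ⟨h, hx.2⟩)
  calc dB p k ≤ _ := Finset.card_le_card hsub
  _ ≤ dB p y + (Finset.Ico y k).card := Finset.card_union_le _ _
  _ = dB p y + (k - y) := by rw [Nat.card_Ico]

lemma cext_ge_dB (c : Fin k → Fin (m + 1)) (h : Adpt p c) :
    ∀ y, y ≤ k → dB p y ≤ cext c y := by
  intro y
  induction y with
  | zero => intro _; rw [dB_zero, cext_zero]
  | succ y ih =>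
    intro hy
    have hy' : y < k := by omega
    have hA := h y hy'
    rw [dB_succ]
    by_cases hd : y ∈ desF (wOf p)
    · have := hA.2 ((mem_desF p).1 hd).2
      have := ih (by omega)
      simp only [hd, if_true]
      omega
    · have := hA.1
      have := ih (by omega)
      simp only [hd, if_false]
      omega


lemma dB_le_self (y : ℕ) : dB p y ≤ y := by
  have : (desF (wOf p)).filter (fun x => x < y) ⊆ Finset.range y := by
    intro x hx
    exact Finset.mem_range.2 (Finset.mem_filter.1 hx).2
  simpa [dB] using Finset.card_le_card this

lemma fin_strictMono_of_succ {α : Type*} [Preorder α] {k : ℕ} (g : Fin k → α)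
    (h : ∀ y (h1 : y + 1 < k), g ⟨y, Nat.lt_of_succ_lt h1⟩ < g ⟨y + 1, h1⟩) : StrictMono g := by
  have key : ∀ n (a : ℕ) (ha : a < k) (hb : a + n + 1 < k), g ⟨a, ha⟩ < g ⟨a + n + 1, hb⟩ := by
    intro n
    induction n with
    | zero => intro a ha hb; exact h a hb
    | succ n ih =>
      intro a ha hb
      exact lt_trans (ih a ha (by omega)) (h (a + n + 1) (by omega))
  rintro ⟨a, ha⟩ ⟨b, hb⟩ hab
  have hab' : a < b := hab
  obtain ⟨n, rfl⟩ : ∃ n, b = a + n + 1 := ⟨b - a - 1, by omega⟩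
  exact key n a ha hb

lemma strictMono_gap {N k : ℕ} (d : Fin k → Fin N) (hd : StrictMono d) :
    ∀ (a b : ℕ) (ha : a < k) (hb : b < k), a ≤ b →
      (d ⟨a, ha⟩ : ℕ) + (b - a) ≤ (d ⟨b, hb⟩ : ℕ) := by
  have key : ∀ n (a : ℕ) (ha : a < k) (hb : a + n < k),
      (d ⟨a, ha⟩ : ℕ) + n ≤ (d ⟨a + n, hb⟩ : ℕ) := by
    intro n
    induction n with
    | zero => intro a ha hb; simp
    | succ n ih =>
      intro a ha hb
      have hank : a + n < k := by omega
      have h1 := ih a ha hank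
      have h2' : (d ⟨a + n, hank⟩ : ℕ) < (d ⟨a + n + 1, hb⟩ : ℕ) :=
        hd (show (⟨a + n, hank⟩ : Fin k) < ⟨a + n + 1, hb⟩ by simp [Fin.lt_def])
      show (d ⟨a, ha⟩ : ℕ) + (n + 1) ≤ (d ⟨a + n + 1, hb⟩ : ℕ)
      omega
  intro a b ha hb hab
  obtain ⟨n, rfl⟩ : ∃ n, b = a + n := ⟨b - a, by omega⟩
  have hredux : a + n - a = n := by omega
  rw [hredux]
  exact key n a ha hb

lemma dOf_bound (c : Fin k → Fin (m + 1)) (hA : Adpt p c) (z : Fin k) :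
    (c z : ℕ) + z.val - dB p (z.val + 1) < m + (k - (desF (wOf p)).card) := by
  have h1 : dB p (z.val + 1) ≤ (c z : ℕ) := by
    have := cext_ge_dB p c hA (z.val + 1) z.isLt
    rwa [cext_succ _ z.isLt, Fin.eta] at this
  have h2 := dB_diff p (z.val + 1) z.isLt
  have h3 := dB_k p
  have h4 := (c z).isLt
  have h5 := z.isLt
  have h6 := dB_le_self p (z.val + 1)
  omega

lemma strictMono_dOf (c : Fin k → Fin (m + 1)) (hA : Adpt p c) :
    StrictMono (fun z : Fin k => (⟨(c z : ℕ) + z.val - dB p (z.val + 1),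
      dOf_bound p c hA z⟩ : Fin (m + (k - (desF (wOf p)).card)))) := by
  apply fin_strictMono_of_succ
  intro y hy1
  have hy : y < k := by omega
  rw [Fin.lt_def]
  show (c ⟨y, hy⟩ : ℕ) + y - dB p (y + 1) < (c ⟨y + 1, hy1⟩ : ℕ) + (y + 1) - dB p (y + 1 + 1)
  have hd2 := dB_succ p (y + 1)
  have hA1 := hA (y + 1) hy1
  rw [cext_succ _ hy, cext_succ _ hy1] at hA1
  have h1 : dB p (y + 1) ≤ (c ⟨y, hy⟩ : ℕ) := by
    have := cext_ge_dB p c hA (y + 1) hy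
    rwa [cext_succ _ hy] at this
  by_cases hd : y + 1 ∈ desF (wOf p)
  · have hstrict := hA1.2 ((mem_desF p).1 hd).2
    rw [if_pos hd] at hd2
    omega
  · rw [if_neg hd] at hd2
    have hweak := hA1.1
    omega

lemma cOf_bound {N : ℕ} (hN : N = m + (k - (desF (wOf p)).card)) (d : Fin k → Fin N)
    (hd : StrictMono d) (z : Fin k) :
    (d z : ℕ) + dB p (z.val + 1) - z.val < m + 1 := by
  have hk1 : k - 1 < k := by have := z.isLt; omega
  have hgap := strictMono_gap d hd z.val (k - 1) z.isLt hk1 (by have := z.isLt; omega)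
  have hlt : (d ⟨k - 1, hk1⟩ : ℕ) < N := (d _).isLt
  have h2 := dB_diff p (z.val + 1) z.isLt
  have h3 := dB_k p
  have h5 := z.isLt
  have h6 := dB_le_self p (z.val + 1)
  have hmono : dB p (z.val + 1) ≤ dB p k := dB_le_of_le p z.isLt
  rw [Fin.eta] at hgap
  omega

lemma adpt_cOf {N : ℕ} (hN : N = m + (k - (desF (wOf p)).card)) (d : Fin k → Fin N)
    (hd : StrictMono d) :
    Adpt p (fun z : Fin k => (⟨(d z : ℕ) + dB p (z.val + 1) - z.val,
      cOf_bound p hN d hd z⟩ : Fin (m + 1))) := by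
  intro y hy
  have hz : ∀ (x : ℕ) (hx : x < k), x ≤ (d ⟨x, hx⟩ : ℕ) := by
    intro x hx
    have h0 : (0 : ℕ) < k := by omega
    have := strictMono_gap d hd 0 x h0 hx (Nat.zero_le _)
    omega
  rcases Nat.eq_zero_or_pos y with rfl | hy1
  · rw [cext_zero, cext_succ _ hy]
    refine ⟨Nat.zero_le _, fun hdes => ?_⟩
    have h0d : (0 : ℕ) ∈ desF (wOf p) := (mem_desF p).2 ⟨hy, hdes⟩
    have hdb : dB p (0 + 1) = 1 := by
      rw [dB_succ, if_pos h0d, dB_zero]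
    show 0 < (d ⟨0, hy⟩ : ℕ) + dB p (0 + 1) - 0
    omega
  · obtain ⟨x, rfl⟩ : ∃ x, y = x + 1 := ⟨y - 1, by omega⟩
    have hx : x < k := by omega
    rw [cext_succ _ hx, cext_succ _ hy]
    have hd2 := dB_succ p (x + 1)
    have hzx := hz x hx
    have hzx1 := hz (x + 1) hy
    have hstep : (d ⟨x, hx⟩ : ℕ) < (d ⟨x + 1, hy⟩ : ℕ) :=
      hd (show (⟨x, hx⟩ : Fin k) < ⟨x + 1, hy⟩ by simp [Fin.lt_def])
    have h6 := dB_le_self p (x + 1)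
    refine ⟨?_, fun hdes => ?_⟩
    · show (d ⟨x, hx⟩ : ℕ) + dB p (x + 1) - x ≤
        (d ⟨x + 1, hy⟩ : ℕ) + dB p (x + 1 + 1) - (x + 1)
      by_cases hdes : x + 1 ∈ desF (wOf p)
      · rw [if_pos hdes] at hd2; omega
      · rw [if_neg hdes] at hd2; omega
    · have hmem : x + 1 ∈ desF (wOf p) := (mem_desF p).2 ⟨hy, hdes⟩
      rw [if_pos hmem] at hd2
      show (d ⟨x, hx⟩ : ℕ) + dB p (x + 1) - x <
        (d ⟨x + 1, hy⟩ : ℕ) + dB p (x + 1 + 1) - (x + 1)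
      omega


lemma dB_le_c (c : Fin k → Fin (m + 1)) (hA : Adpt p c) (z : Fin k) :
    dB p (z.val + 1) ≤ (c z : ℕ) := by
  have := cext_ge_dB p c hA (z.val + 1) z.isLt
  rwa [cext_succ _ z.isLt, Fin.eta] at this

lemma le_d_self {N : ℕ} (d : Fin k → Fin N) (hd : StrictMono d) (z : Fin k) :
    z.val ≤ (d z : ℕ) := by
  have h0 : (0 : ℕ) < k := lt_of_le_of_lt (Nat.zero_le _) z.isLt
  have := strictMono_gap d hd 0 z.val h0 z.isLt (Nat.zero_le _)
  rw [Fin.eta] at this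
  omega

noncomputable local instance adptDec (p : SP k) : DecidablePred (fun c : Fin k → Fin (m + 1) => Adpt p c) :=
  fun _ => Classical.dec _

lemma card_strictMono (k N : ℕ) :
    ((Finset.univ : Finset (Fin k → Fin N)).filter (fun d => StrictMono d)).card
      = N.choose k := by
  classical
  have h := Finset.card_powersetCard k (Finset.univ : Finset (Fin N))
  rw [Finset.card_univ, Fintype.card_fin] at h
  rw [← h]
  refine Finset.card_bij (fun d _ => Finset.image d Finset.univ) ?_ ?_ ?_
  · intro d hd
    rw [Finset.mem_filter] at hd
    rw [Finset.mem_powersetCard]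
    exact ⟨Finset.subset_univ _, by
      rw [Finset.card_image_of_injective _ hd.2.injective, Finset.card_univ,
        Fintype.card_fin]⟩
  · intro d hd d' hd' h
    rw [Finset.mem_filter] at hd hd'
    have h' : Finset.image d Finset.univ = Finset.image d' Finset.univ := h
    have hc : (Finset.image d Finset.univ).card = k := by
      rw [Finset.card_image_of_injective _ hd.2.injective, Finset.card_univ, Fintype.card_fin]
    have e1 := Finset.orderEmbOfFin_unique hc (fun x => Finset.mem_image_of_mem d (Finset.mem_univ x)) hd.2
    have e2 := Finset.orderEmbOfFin_unique hc (fun x => h' ▸ Finset.mem_image_of_mem d' (Finset.mem_univ x)) hd'.2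
    funext x
    rw [show d = _ from e1, show d' = _ from e2]
  · intro s hs
    rw [Finset.mem_powersetCard] at hs
    refine ⟨fun i => s.orderEmbOfFin hs.2 i, ?_, ?_⟩
    · rw [Finset.mem_filter]
      exact ⟨Finset.mem_univ _, (s.orderEmbOfFin hs.2).strictMono⟩
    · apply Finset.coe_injective
      rw [Finset.coe_image, Finset.coe_univ, Set.image_univ]
      exact Finset.range_orderEmbOfFin s hs.2

lemma fiber_card (p : SP k) :
    ((Finset.univ : Finset (Fin k → Fin (2 * m + 1))).filter (fun f => st m f = p)).card
      = ((Finset.univ : Finset (Fin k → Fin (m + 1))).filter (fun c => Adpt p c)).card := by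
  symm
  refine Finset.card_bij (fun c _ => Phi m p c) ?_ ?_ ?_
  · intro c hc
    rw [Finset.mem_filter] at hc ⊢
    exact ⟨Finset.mem_univ _, st_Phi p c hc.2⟩
  · intro c hc c' hc' h
    rw [Finset.mem_filter] at hc hc'
    calc c = cF m (Phi m p c) := (cF_Phi p c hc.2).symm
    _ = cF m (Phi m p c') := by rw [show Phi m p c = Phi m p c' from h]
    _ = c' := cF_Phi p c' hc'.2
  · intro f hf
    rw [Finset.mem_filter] at hf
    refine ⟨cF m f, Finset.mem_filter.2 ⟨Finset.mem_univ _, ?_⟩, ?_⟩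
    · rw [← hf.2]; exact adpt_cF f
    · show Phi m p (cF m f) = f
      rw [← hf.2]
      exact Phi_st_cF f

lemma adpt_card (p : SP k) :
    ((Finset.univ : Finset (Fin k → Fin (m + 1))).filter (fun c => Adpt p c)).card
      = (m + (k - (desF (wOf p)).card)).choose k := by
  rw [← card_strictMono k (m + (k - (desF (wOf p)).card))]
  refine Finset.card_bij (fun c hc => fun z => ⟨(c z : ℕ) + z.val - dB p (z.val + 1),
    dOf_bound p c (Finset.mem_filter.1 hc).2 z⟩) ?_ ?_ ?_
  · intro c hc
    rw [Finset.mem_filter]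
    exact ⟨Finset.mem_univ _, strictMono_dOf p c (Finset.mem_filter.1 hc).2⟩
  · intro c hc c' hc' h
    have h1 := (Finset.mem_filter.1 hc).2
    have h1' := (Finset.mem_filter.1 hc').2
    funext z
    have hz : ((c z : ℕ) + z.val - dB p (z.val + 1) : ℕ)
        = ((c' z : ℕ) + z.val - dB p (z.val + 1) : ℕ) := congrArg Fin.val (congrFun h z)
    have hb1 := dB_le_c p c h1 z
    have hb2 := dB_le_c p c' h1' z
    exact Fin.ext (by omega)
  · intro d hd
    have hsd := (Finset.mem_filter.1 hd).2
    refine ⟨fun z => ⟨(d z : ℕ) + dB p (z.val + 1) - z.val, cOf_bound p rfl d hsd z⟩,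
      Finset.mem_filter.2 ⟨Finset.mem_univ _, adpt_cOf p rfl d hsd⟩, ?_⟩
    funext z
    apply Fin.ext
    show ((d z : ℕ) + dB p (z.val + 1) - z.val) + z.val - dB p (z.val + 1) = (d z : ℕ)
    have hz := le_d_self d hsd z
    have h6 := dB_le_self p (z.val + 1)
    omega


def Bnum (k t : ℕ) : ℕ :=
  ((Finset.univ : Finset (SP k)).filter (fun p => (desF (wOf p)).card = t)).card

lemma desF_card_le' (p : SP k) : (desF (wOf p)).card ≤ k :=
  le_trans (Finset.card_filter_le _ _) (by simp)

lemma worpitzky (k m : ℕ) :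
    ∑ t ∈ Finset.range (k + 1), (Bnum k t) * (m + (k - t)).choose k = (2 * m + 1) ^ k := by
  classical
  have h1 : ((Finset.univ : Finset (Fin k → Fin (2 * m + 1)))).card = (2 * m + 1) ^ k := by
    simp
  rw [← h1, Finset.card_eq_sum_card_fiberwise
    (f := st m) (t := (Finset.univ : Finset (SP k))) (fun f _ => Finset.mem_univ (st m f))]
  have h2 : ∑ p ∈ (Finset.univ : Finset (SP k)),
      ((Finset.univ.filter (fun f : Fin k → Fin (2 * m + 1) => st m f = p)).card)
      = ∑ p ∈ (Finset.univ : Finset (SP k)), (m + (k - (desF (wOf p)).card)).choose k :=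
    Finset.sum_congr rfl (fun p _ => (fiber_card p).trans (adpt_card p))
  rw [h2, ← Finset.sum_fiberwise_of_maps_to
    (g := fun p : SP k => (desF (wOf p)).card)
    (fun p _ => Finset.mem_range.2 (Nat.lt_succ_of_le (desF_card_le' p)))]
  refine Finset.sum_congr rfl (fun t ht => ?_)
  have h3 : ∀ p ∈ (Finset.univ : Finset (SP k)).filter
      (fun p => (desF (wOf p)).card = t),
      (m + (k - (desF (wOf p)).card)).choose k = (m + (k - t)).choose k := by
    intro p hp
    rw [(Finset.mem_filter.1 hp).2]
  rw [Finset.sum_congr rfl h3, Finset.sum_const, smul_eq_mul]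
  rfl


section
open PowerSeries
lemma coeff_one_sub_pow (r j : ℕ) :
    (PowerSeries.coeff (R := ℤ) j) ((1 - PowerSeries.X) ^ r)
      = (-1 : ℤ) ^ j * (r.choose j) := by
  have h : ((1 : ℤ⟦X⟧) - X) ^ r
      = ∑ i ∈ range (r + 1), PowerSeries.C (R := ℤ) ((-1 : ℤ) ^ i * (r.choose i)) * X ^ i := by
    have h0 : ((1 : ℤ⟦X⟧) - X) = PowerSeries.C (R := ℤ) 1 - PowerSeries.C (R := ℤ) 1 * X := by
      simp
    rw [h0, sub_eq_add_neg, add_comm, add_pow]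
    refine Finset.sum_congr rfl (fun i _ => ?_)
    rw [neg_pow, mul_pow]
    simp only [map_mul, map_pow, map_neg, map_one, one_pow, map_natCast]
    ring
  rw [h, map_sum]
  by_cases hj : j ≤ r
  · rw [Finset.sum_eq_single j]
    · rw [PowerSeries.coeff_C_mul_X_pow, if_pos rfl]
    · intro i _ hij
      rw [PowerSeries.coeff_C_mul_X_pow, if_neg (Ne.symm hij)]
    · intro h'; exact absurd (Finset.mem_range.2 (by omega)) h'
  · rw [Finset.sum_eq_zero, Nat.choose_eq_zero_of_lt (by omega)]
    · simp
    · intro i hi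
      rw [Finset.mem_range] at hi
      rw [PowerSeries.coeff_C_mul_X_pow, if_neg (by omega)]

lemma delta_identity (k m : ℕ) :
    (∑ j ∈ range (m + 1), (-1 : ℤ) ^ j * ((k + 1).choose j) * ((k + (m - j)).choose k))
      = if m = 0 then 1 else 0 := by
  have key : ((1 : ℤ⟦X⟧) - X) ^ (k + 1) * (invOneSubPow ℤ (k + 1)).val = 1 := by
    rw [← invOneSubPow_inv_eq_one_sub_pow]
    exact (invOneSubPow ℤ (k + 1)).inv_val
  have hc := congrArg (PowerSeries.coeff (R := ℤ) m) key
  rw [PowerSeries.coeff_mul, PowerSeries.coeff_one] at hc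
  rw [← hc]
  rw [Finset.Nat.sum_antidiagonal_eq_sum_range_succ_mk]
  refine Finset.sum_congr rfl (fun j hj => ?_)
  rw [Finset.mem_range] at hj
  rw [coeff_one_sub_pow, invOneSubPow_val_succ_eq_mk_add_choose, PowerSeries.coeff_mk]



end

lemma inner_eval (k ℓ t : ℕ) (hl : ℓ ≤ k) (ht : t ≤ k) :
    ∑ j ∈ Finset.range (ℓ + 1),
      (-1 : ℤ) ^ j * ((k + 1).choose j) * ((((ℓ - j) + (k - t)).choose k : ℕ) : ℤ)
      = if t = ℓ then 1 else 0 := by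
  rcases lt_or_ge ℓ t with hlt | hge
  · rw [if_neg (by omega)]
    refine Finset.sum_eq_zero (fun j hj => ?_)
    rw [Finset.mem_range] at hj
    rw [Nat.choose_eq_zero_of_lt (show (ℓ - j) + (k - t) < k by omega)]
    simp
  · have hsub : Finset.range (ℓ - t + 1) ⊆ Finset.range (ℓ + 1) :=
      Finset.range_subset_range.2 (by omega)
    rw [← Finset.sum_subset hsub (fun j hj hj' => ?_)]
    · have hcg : ∀ j ∈ Finset.range (ℓ - t + 1),
          (-1 : ℤ) ^ j * ((k + 1).choose j) * ((((ℓ - j) + (k - t)).choose k : ℕ) : ℤ)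
          = (-1 : ℤ) ^ j * ((k + 1).choose j) * (((k + ((ℓ - t) - j)).choose k : ℕ) : ℤ) := by
        intro j hj
        rw [Finset.mem_range] at hj
        have he : (ℓ - j) + (k - t) = k + ((ℓ - t) - j) := by omega
        rw [he]
      rw [Finset.sum_congr rfl hcg, delta_identity]
      by_cases h0 : ℓ - t = 0
      · rw [if_pos h0, if_pos (by omega)]
      · rw [if_neg h0, if_neg (by omega)]
    · rw [Finset.mem_range] at hj
      rw [Finset.mem_range] at hj'
      rw [Nat.choose_eq_zero_of_lt (show (ℓ - j) + (k - t) < k by omega)]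
      simp

theorem final (k ℓ : ℕ) (hk : 1 ≤ k) (hl : ℓ ≤ k) :
    ((Bnum k ℓ : ℕ) : ℤ) =
    ∑ j ∈ Finset.range (ℓ + 1),
      (-1 : ℤ) ^ j * ((k + 1).choose j : ℤ) * (2 * ((ℓ : ℤ) - j) + 1) ^ k := by
  symm
  have key : ∀ j ∈ Finset.range (ℓ + 1), (2 * ((ℓ : ℤ) - j) + 1) ^ k
      = ∑ t ∈ Finset.range (k + 1), (Bnum k t : ℤ) * ((((ℓ - j) + (k - t)).choose k : ℕ) : ℤ) := by
    intro j hj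
    rw [Finset.mem_range] at hj
    have hw := worpitzky k (ℓ - j)
    have hcast : (2 * ((ℓ : ℤ) - j) + 1) = ((2 * (ℓ - j) + 1 : ℕ) : ℤ) := by
      push_cast
      omega
    rw [hcast, ← Nat.cast_pow, ← hw]
    push_cast
    rfl
  calc ∑ j ∈ Finset.range (ℓ + 1),
      (-1 : ℤ) ^ j * ((k + 1).choose j : ℤ) * (2 * ((ℓ : ℤ) - j) + 1) ^ k
      = ∑ j ∈ Finset.range (ℓ + 1), ∑ t ∈ Finset.range (k + 1),
          (Bnum k t : ℤ) * ((-1 : ℤ) ^ j * ((k + 1).choose j : ℤ)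
            * ((((ℓ - j) + (k - t)).choose k : ℕ) : ℤ)) := by
        refine Finset.sum_congr rfl (fun j hj => ?_)
        rw [key j hj, Finset.mul_sum]
        refine Finset.sum_congr rfl (fun t _ => by ring)
  _ = ∑ t ∈ Finset.range (k + 1), (Bnum k t : ℤ) *
        ∑ j ∈ Finset.range (ℓ + 1),
          (-1 : ℤ) ^ j * ((k + 1).choose j : ℤ) * ((((ℓ - j) + (k - t)).choose k : ℕ) : ℤ) := by
        rw [Finset.sum_comm]
        refine Finset.sum_congr rfl (fun t _ => ?_)
        rw [Finset.mul_sum]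
  _ = ∑ t ∈ Finset.range (k + 1), (Bnum k t : ℤ) * (if t = ℓ then 1 else 0) := by
        refine Finset.sum_congr rfl (fun t ht => ?_)
        rw [Finset.mem_range] at ht
        rw [inner_eval k ℓ t hl (by omega)]
  _ = (Bnum k ℓ : ℤ) := by
        have hmi : ∀ t ∈ Finset.range (k + 1),
            (Bnum k t : ℤ) * (if t = ℓ then 1 else 0)
              = if t = ℓ then (Bnum k t : ℤ) else 0 := fun t _ => by
          split_ifs <;> ring
        rw [Finset.sum_congr rfl hmi,
          Finset.sum_ite_eq' (Finset.range (k + 1)) ℓ (fun t => (Bnum k t : ℤ)),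
          if_pos (Finset.mem_range.2 (by omega))]


lemma desF_card_le {k : ℕ} (w : Fin k → ℤ) : (desF w).card ≤ k := by
  classical
  calc (desF w).card ≤ (Finset.range k).card := Finset.card_filter_le _ _
  _ = k := Finset.card_range k

lemma sdc_eq {k : ℕ} (w : Fin k → ℤ) : signedDescentCount w = (desF w).card := by
  classical
  rw [signedDescentCount, ← Nat.card_eq_finsetCard]
  exact Nat.card_congr (Equiv.subtypeEquivRight (fun z => by
    simp [desF, Finset.mem_filter, Finset.mem_range, and_comm]))

lemma eulerianB_eq (k ℓ : ℕ) :
    eulerianBNum k ℓ =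
      ((univ : Finset (SP k)).filter (fun p => (desF (wOf p)).card = ℓ)).card := by
  classical
  rw [eulerianBNum, ← Fintype.card_subtype, ← Nat.card_eq_fintype_card]
  refine Nat.card_congr (Equiv.symm (Equiv.ofBijective
    (fun p => ⟨wOf p.1, isSignedPerm_wOf _, by rw [sdc_eq]; exact p.2⟩) ⟨?_, ?_⟩))
  · rintro ⟨p, hp⟩ ⟨q, hq⟩ h
    exact Subtype.ext (wOf_injective (congrArg Subtype.val h))
  · rintro ⟨w, hw, hl⟩
    obtain ⟨p, rfl⟩ := exists_wOf w hw
    exact ⟨⟨p, by rwa [sdc_eq] at hl⟩, rfl⟩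


end Stmt16A

/-- `⟨B_k, ℓ⟩ = Σ_{j=0}^{ℓ} (−1)^j · binom(k+1, j) · (2(ℓ−j)+1)^k`. -/
theorem stmt16 (k ℓ : ℕ) (hk : 1 ≤ k) (hl : ℓ ≤ k) :
    (eulerianBNum k ℓ : ℤ) =
    ∑ j ∈ Finset.range (ℓ + 1),
      (-1 : ℤ) ^ j * ((k + 1).choose j : ℤ) * (2 * ((ℓ : ℤ) - j) + 1) ^ k := by
  rw [Stmt16A.eulerianB_eq]
  exact Stmt16A.final k ℓ hk hl
end

section
/- Let k ≥ 1 be an integer. Then the alternating sum of type-B Eulerian numbers Σ_{ℓ=0}^{k} (−1)^ℓ · ⟨B_k, ℓ⟩ equals 0 if k is odd, and equals (−1)^{k/2} · 2^k · E_k if k is even. -/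
/-- The Euler zigzag number `E n`: the number of alternating permutations of
`{0, …, n-1}`, i.e. permutations `σ` with `σ 0 < σ 1 > σ 2 < σ 3 > ⋯`. -/
noncomputable def zigzagNum (n : ℕ) : ℕ :=
  Nat.card {σ : Equiv.Perm (Fin n) //
    ∀ z : ℕ, ∀ h : z + 1 < n,
      if z % 2 = 0 then σ ⟨z, Nat.lt_of_succ_lt h⟩ < σ ⟨z + 1, h⟩
      else σ ⟨z + 1, h⟩ < σ ⟨z, Nat.lt_of_succ_lt h⟩}

namespace Stmt17


def dterm (x y : ℤ) : ℤ := if y < x then -1 else 1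

def S : ℕ → (ℕ → ℤ) → ℤ → ℤ
  | 0, _, _ => 1
  | (k+1), a, x =>
      dterm x (a 0) * S k (fun n => a (n+1)) (a 0)
      + dterm x (-(a 0)) * S k (fun n => a (n+1)) (-(a 0))

def DU (k : ℕ) (a : ℕ → ℤ) : Prop :=
  ∀ i, i + 1 < k → (if Even i then a (i+1) < a i else a i < a (i+1))

def UD (k : ℕ) (a : ℕ → ℤ) : Prop :=
  ∀ i, i + 1 < k → (if Even i then a i < a (i+1) else a (i+1) < a i)

open Classical in
noncomputable def Phi (k : ℕ) (a : ℕ → ℤ) : ℤ :=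
  if Even k ∧ DU k a then (-1)^(k/2) * 2^k else 0

open Classical in
noncomputable def Psi (k : ℕ) (a : ℕ → ℤ) : ℤ :=
  if k = 0 then 1 else if ¬ Even k ∧ UD k a then (-1)^(k/2) * 2^k else 0

lemma UD_succ (k : ℕ) (hk : 1 ≤ k) (a : ℕ → ℤ) :
    UD (k+1) a ↔ a 0 < a 1 ∧ DU k (fun n => a (n+1)) := by
  constructor
  · intro h
    refine ⟨by simpa using h 0 (by omega), fun j hj => ?_⟩
    have := h (j+1) (by omega)
    rcases Nat.even_or_odd j with he | ho
    · have h1 : ¬ Even (j+1) := by simp [Nat.even_add_one, he]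
      simp only [if_neg h1] at this
      simpa [if_pos he] using this
    · have he' : ¬ Even j := Nat.not_even_iff_odd.mpr ho
      have h1 : Even (j+1) := by simp [Nat.even_add_one, he']
      simp only [if_pos h1] at this
      simpa [if_neg he'] using this
  · rintro ⟨h0, h⟩ i hi
    match i with
    | 0 => simpa using h0
    | (j+1) =>
      have := h j (by omega)
      rcases Nat.even_or_odd j with he | ho
      · have h1 : ¬ Even (j+1) := by simp [Nat.even_add_one, he]
        simp only [if_pos he] at this
        simpa [if_neg h1] using this
      · have he' : ¬ Even j := Nat.not_even_iff_odd.mpr ho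
        have h1 : Even (j+1) := by simp [Nat.even_add_one, he']
        simp only [if_neg he'] at this
        simpa [if_pos h1] using this

lemma DU_succ (k : ℕ) (hk : 1 ≤ k) (a : ℕ → ℤ) :
    DU (k+1) a ↔ a 1 < a 0 ∧ UD k (fun n => a (n+1)) := by
  constructor
  · intro h
    refine ⟨by simpa using h 0 (by omega), fun j hj => ?_⟩
    have := h (j+1) (by omega)
    rcases Nat.even_or_odd j with he | ho
    · have h1 : ¬ Even (j+1) := by simp [Nat.even_add_one, he]
      simp only [if_neg h1] at this
      simpa [if_pos he] using this
    · have he' : ¬ Even j := Nat.not_even_iff_odd.mpr ho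
      have h1 : Even (j+1) := by simp [Nat.even_add_one, he']
      simp only [if_pos h1] at this
      simpa [if_neg he'] using this
  · rintro ⟨h0, h⟩ i hi
    match i with
    | 0 => simpa using h0
    | (j+1) =>
      have := h j (by omega)
      rcases Nat.even_or_odd j with he | ho
      · have h1 : ¬ Even (j+1) := by simp [Nat.even_add_one, he]
        simp only [if_pos he] at this
        simpa [if_neg h1] using this
      · have he' : ¬ Even j := Nat.not_even_iff_odd.mpr ho
        have h1 : Even (j+1) := by simp [Nat.even_add_one, he']
        simp only [if_neg he'] at this
        simpa [if_pos h1] using this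



lemma dterm_of_lt {x y : ℤ} (h : y < x) : dterm x y = -1 := if_pos h
lemma dterm_of_ge {x y : ℤ} (h : ¬ y < x) : dterm x y = 1 := if_neg h

lemma Phi_zero (a : ℕ → ℤ) : Phi 0 a = 1 := by
  simp [Phi, DU]

lemma S_formula (k : ℕ) : ∀ (a : ℕ → ℤ), (∀ i, 1 ≤ a i) → (∀ i, a i ≠ a (i+1)) → ∀ x : ℤ,
    (x < -(a 0) → S k a x = Psi k a)
  ∧ (-(a 0) < x → x < a 0 → S k a x = Phi k a)
  ∧ (a 0 < x → S k a x = if k = 0 then 1 else -(Psi k a)) := by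
  induction k with
  | zero =>
    intro a _ _ x
    refine ⟨fun _ => ?_, fun _ _ => ?_, fun _ => ?_⟩ <;> simp [S, Psi, Phi, DU]
  | succ k IH =>
    intro a hpos hne x
    have ha0 : (1:ℤ) ≤ a 0 := hpos 0
    rcases Nat.eq_zero_or_pos k with rfl | hk
    · -- k = 0 : S 1 a x = dterm x (a 0) + dterm x (-(a 0))
      have hS : S 1 a x = dterm x (a 0) + dterm x (-(a 0)) := by
        simp [S]
      have hPsi : Psi 1 a = 2 := by
        have hUD : UD 1 a := by intro i hi; omega
        have h1 : ¬ Even 1 := by decide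
        simp [Psi, hUD, h1]
      have hPhi : Phi 1 a = 0 := by
        have h1 : ¬ Even 1 := by decide
        simp [Phi, h1]
      refine ⟨fun hx => ?_, fun hx1 hx2 => ?_, fun hx => ?_⟩
      · rw [hS, dterm_of_ge (by linarith), dterm_of_ge (by linarith), hPsi]; ring
      · rw [hS, dterm_of_ge (by linarith), dterm_of_lt (by linarith), hPhi]; ring
      · rw [hS, dterm_of_lt (by linarith), dterm_of_lt (by linarith)]
        simp [hPsi]
    · obtain ⟨m, rfl⟩ : ∃ m, k = m + 1 := ⟨k - 1, by omega⟩
      set a' : ℕ → ℤ := fun n => a (n+1) with ha'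
      have hpos' : ∀ i, 1 ≤ a' i := fun i => hpos (i+1)
      have hne' : ∀ i, a' i ≠ a' (i+1) := fun i => hne (i+1)
      have ha1 : (1:ℤ) ≤ a 1 := hpos 1
      have hS : S (m+2) a x
          = dterm x (a 0) * S (m+1) a' (a 0) + dterm x (-(a 0)) * S (m+1) a' (-(a 0)) := by
        simp [S, ha']
      have IH' := IH a' hpos' hne'
      have ha'0 : a' 0 = a 1 := rfl
      rcases lt_or_gt_of_ne (hne 0) with h01 | h10
      · -- a 0 < a 1 : both inner states are "middle"
        have hm1 : S (m+1) a' (a 0) = Phi (m+1) a' :=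
          (IH' (a 0)).2.1 (by rw [ha'0]; linarith) (by rw [ha'0]; linarith)
        have hm2 : S (m+1) a' (-(a 0)) = Phi (m+1) a' :=
          (IH' (-(a 0))).2.1 (by rw [ha'0]; linarith) (by rw [ha'0]; linarith)
        -- value identity
        have hval : Psi (m+2) a = 2 * Phi (m+1) a' := by
          by_cases hc : Even (m+1) ∧ DU (m+1) a'
          · have hc1 := hc.1
            rw [Nat.even_iff] at hc1
            have hme : ¬ Even (m+2) := by
              rw [Nat.not_even_iff]; omega
            have hUD : UD (m+2) a := (UD_succ (m+1) (by omega) a).2 ⟨h01, hc.2⟩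
            have hdiv : (m+2)/2 = (m+1)/2 := by omega
            rw [Psi, if_neg (by omega : ¬ (m+2 = 0)), if_pos ⟨hme, hUD⟩, Phi, if_pos hc, hdiv]
            ring
          · have hcond : ¬ (¬ Even (m+2) ∧ UD (m+2) a) := by
              rintro ⟨he, hud⟩
              have h2 := (UD_succ (m+1) (by omega) a).1 hud
              apply hc
              refine ⟨?_, h2.2⟩
              rw [Nat.not_even_iff] at he
              rw [Nat.even_iff]
              omega
            rw [Psi, if_neg (by omega : ¬ (m+2 = 0)), if_neg hcond, Phi, if_neg hc]
            try ring
        have hPhi0 : Phi (m+2) a = 0 := by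
          have : ¬ DU (m+2) a := by
            intro h
            exact absurd ((DU_succ (m+1) (by omega) a).1 h).1 (by linarith)
          rw [Phi, if_neg (by tauto)]
        refine ⟨fun hx => ?_, fun hx1 hx2 => ?_, fun hx => ?_⟩
        · rw [hS, dterm_of_ge (by linarith), dterm_of_ge (by linarith), hm1, hm2, hval]; ring
        · rw [hS, dterm_of_ge (by linarith), dterm_of_lt (by linarith), hm1, hm2, hPhi0]; ring
        · rw [hS, dterm_of_lt (by linarith), dterm_of_lt (by linarith), hm1, hm2]
          rw [if_neg (by omega), hval]; ring
      · -- a 1 < a 0 : inner states are "high" and "low"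
        have hm1 : S (m+1) a' (a 0) = -(Psi (m+1) a') := by
          have := (IH' (a 0)).2.2 (by rw [ha'0]; exact h10)
          rwa [if_neg (by omega)] at this
        have hm2 : S (m+1) a' (-(a 0)) = Psi (m+1) a' :=
          (IH' (-(a 0))).1 (by rw [ha'0]; linarith)
        have hval : Phi (m+2) a = -(2 * Psi (m+1) a') := by
          by_cases hc : ¬ Even (m+1) ∧ UD (m+1) a'
          · have hc1 := hc.1
            rw [Nat.not_even_iff] at hc1
            have hme : Even (m+2) := by
              rw [Nat.even_iff]; omega
            have hDU : DU (m+2) a := (DU_succ (m+1) (by omega) a).2 ⟨h10, hc.2⟩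
            have hdiv : (m+2)/2 = (m+1)/2 + 1 := by omega
            rw [Phi, if_pos ⟨hme, hDU⟩, Psi, if_neg (by omega : ¬ (m+1 = 0)), if_pos hc, hdiv]
            ring
          · have hcond : ¬ (Even (m+2) ∧ DU (m+2) a) := by
              rintro ⟨he, hdu⟩
              have h2 := (DU_succ (m+1) (by omega) a).1 hdu
              refine hc ⟨?_, h2.2⟩
              rw [Nat.even_iff] at he
              rw [Nat.not_even_iff]
              omega
            rw [Phi, if_neg hcond, Psi, if_neg (by omega : ¬ (m+1 = 0)), if_neg hc]
            try ring
        have hPsi0 : Psi (m+2) a = 0 := by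
          have : ¬ UD (m+2) a := by
            intro h
            exact absurd ((UD_succ (m+1) (by omega) a).1 h).1 (by linarith)
          rw [Psi, if_neg (by omega), if_neg (by tauto)]
        refine ⟨fun hx => ?_, fun hx1 hx2 => ?_, fun hx => ?_⟩
        · rw [hS, dterm_of_ge (by linarith), dterm_of_ge (by linarith), hm1, hm2, hPsi0]; ring
        · rw [hS, dterm_of_ge (by linarith), dterm_of_lt (by linarith), hm1, hm2, hval]; ring
        · rw [hS, dterm_of_lt (by linarith), dterm_of_lt (by linarith), hm1, hm2]
          rw [if_neg (by omega), hPsi0]; ring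

lemma S_zero_eq_Phi (k : ℕ) (a : ℕ → ℤ) (hpos : ∀ i, 1 ≤ a i) (hne : ∀ i, a i ≠ a (i+1)) :
    S k a 0 = Phi k a := by
  rcases Nat.eq_zero_or_pos k with rfl | hk
  · simp [S, Phi_zero]
  · exact (S_formula k a hpos hne 0).2.1 (by linarith [hpos 0]) (by linarith [hpos 0])



def ext {k : ℕ} (s : Fin k → Bool) : ℕ → Bool := fun n => if h : n < k then s ⟨n, h⟩ else false

def sq (a : ℕ → ℤ) (x : ℤ) (s : ℕ → Bool) : ℕ → ℤ
  | 0 => x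
  | (n+1) => if s n then a n else -(a n)

lemma ext_cons_zero {k : ℕ} (t : Bool) (u : Fin k → Bool) : ext (Fin.cons t u) 0 = t := by
  simp [ext]

lemma ext_cons_succ {k : ℕ} (t : Bool) (u : Fin k → Bool) (j : ℕ) (hj : j < k) :
    ext (Fin.cons t u) (j+1) = ext u j := by
  have h1 : j + 1 < k + 1 := by omega
  rw [ext, ext, dif_pos h1, dif_pos hj]
  have : (⟨j+1, h1⟩ : Fin (k+1)) = Fin.succ ⟨j, hj⟩ := rfl
  rw [this, Fin.cons_succ]

lemma sq_shift {k : ℕ} (a : ℕ → ℤ) (x : ℤ) (t : Bool) (u : Fin k → Bool) :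
    ∀ n, n ≤ k → sq a x (ext (Fin.cons t u)) (n+1)
      = sq (fun m => a (m+1)) (if t then a 0 else -(a 0)) (ext u) n := by
  intro n hn
  match n with
  | 0 =>
    show (if ext (Fin.cons t u) 0 then a 0 else -(a 0)) = _
    rw [ext_cons_zero]
    rfl
  | (j+1) =>
    show (if ext (Fin.cons t u) (j+1) then a (j+1) else -(a (j+1))) = _
    rw [ext_cons_succ t u j (by omega)]
    rfl

lemma S_eq_sum : ∀ (k : ℕ) (a : ℕ → ℤ) (x : ℤ),
    S k a x = ∑ s : Fin k → Bool, ∏ i ∈ Finset.range k,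
      dterm (sq a x (ext s) i) (sq a x (ext s) (i+1)) := by
  intro k
  induction k with
  | zero => intro a x; simp [S]
  | succ k IH =>
    intro a x
    have hrw : ∑ s : Fin (k+1) → Bool, ∏ i ∈ Finset.range (k+1),
        dterm (sq a x (ext s) i) (sq a x (ext s) (i+1))
      = ∑ p : Bool × (Fin k → Bool), ∏ i ∈ Finset.range (k+1),
        dterm (sq a x (ext ((Fin.consEquiv (fun _ : Fin (k+1) => Bool)) p)) i)
              (sq a x (ext ((Fin.consEquiv (fun _ : Fin (k+1) => Bool)) p)) (i+1)) :=
      (Equiv.sum_comp (Fin.consEquiv (fun _ : Fin (k+1) => Bool)) _).symm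
    rw [hrw, Fintype.sum_prod_type]
    have hbody : ∀ (t : Bool) (u : Fin k → Bool),
        (∏ i ∈ Finset.range (k+1),
          dterm (sq a x (ext ((Fin.consEquiv (fun _ : Fin (k+1) => Bool)) (t, u))) i)
                (sq a x (ext ((Fin.consEquiv (fun _ : Fin (k+1) => Bool)) (t, u))) (i+1)))
      = dterm x (if t then a 0 else -(a 0)) *
        ∏ i ∈ Finset.range k,
          dterm (sq (fun m => a (m+1)) (if t then a 0 else -(a 0)) (ext u) i)
                (sq (fun m => a (m+1)) (if t then a 0 else -(a 0)) (ext u) (i+1)) := by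
      intro t u
      have hsymm : (Fin.consEquiv (fun _ : Fin (k+1) => Bool)) (t, u) = Fin.cons t u := rfl
      rw [hsymm, Finset.prod_range_succ']
      have hf0 : dterm (sq a x (ext (Fin.cons t u)) 0) (sq a x (ext (Fin.cons t u)) 1)
          = dterm x (if t then a 0 else -(a 0)) := by
        show dterm x (if ext (Fin.cons t u) 0 then a 0 else -(a 0)) = _
        rw [ext_cons_zero]
      rw [hf0, mul_comm]
      congr 1
      refine Finset.prod_congr rfl fun i hi => ?_
      rw [Finset.mem_range] at hi
      rw [sq_shift a x t u i (by omega), sq_shift a x t u (i+1) (by omega)]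
    have hsum : ∀ t : Bool, (∑ u : Fin k → Bool, ∏ i ∈ Finset.range (k+1),
          dterm (sq a x (ext ((Fin.consEquiv (fun _ : Fin (k+1) => Bool)) (t, u))) i)
                (sq a x (ext ((Fin.consEquiv (fun _ : Fin (k+1) => Bool)) (t, u))) (i+1)))
        = dterm x (if t then a 0 else -(a 0)) *
            S k (fun m => a (m+1)) (if t then a 0 else -(a 0)) := by
      intro t
      rw [IH (fun m => a (m+1)) (if t then a 0 else -(a 0)), Finset.mul_sum]
      exact Finset.sum_congr rfl fun u _ => hbody t u
    rw [Fintype.sum_bool, hsum true, hsum false]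
    show dterm x (a 0) * S k (fun n => a (n+1)) (a 0)
        + dterm x (-(a 0)) * S k (fun n => a (n+1)) (-(a 0)) = _
    simp



/-! ### Linking to signed permutations -/

def aperm {k : ℕ} (σ : Equiv.Perm (Fin k)) : ℕ → ℤ :=
  fun n => if h : n < k then ((σ ⟨n, h⟩ : ℕ) : ℤ) + 1 else (n : ℤ) + (k : ℤ) + 2

lemma aperm_pos {k : ℕ} (σ : Equiv.Perm (Fin k)) : ∀ i, 1 ≤ aperm σ i := by
  intro i
  rw [aperm]
  split
  · have : (0:ℤ) ≤ ((σ ⟨i, by assumption⟩ : ℕ) : ℤ) := Int.natCast_nonneg _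
    linarith
  · have : (0:ℤ) ≤ (i:ℤ) := Int.natCast_nonneg _
    have : (0:ℤ) ≤ (k:ℤ) := Int.natCast_nonneg _
    omega

lemma aperm_lt_k {k : ℕ} (σ : Equiv.Perm (Fin k)) (i : ℕ) (h : i < k) :
    aperm σ i ≤ (k : ℤ) := by
  rw [aperm, dif_pos h]
  have : (σ ⟨i, h⟩ : ℕ) < k := (σ ⟨i, h⟩).2
  omega

lemma aperm_ne {k : ℕ} (σ : Equiv.Perm (Fin k)) : ∀ i, aperm σ i ≠ aperm σ (i+1) := by
  intro i
  by_cases h1 : i + 1 < k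
  · have h0 : i < k := by omega
    rw [aperm, aperm, dif_pos h0, dif_pos h1]
    intro hc
    have : σ ⟨i, h0⟩ = σ ⟨i+1, h1⟩ := by
      apply Fin.ext
      have := hc
      omega
    have h5 := σ.injective this
    simp only [Fin.mk.injEq] at h5
    omega
  · by_cases h0 : i < k
    · have hle := aperm_lt_k σ i h0
      have h2 : aperm σ (i+1) = (i:ℤ) + 1 + k + 2 := by
        rw [aperm, dif_neg h1]
        push_cast
        ring
      intro hc
      rw [h2] at hc
      have : (0:ℤ) ≤ (i:ℤ) := Int.natCast_nonneg _
      linarith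
    · rw [aperm, aperm, dif_neg h0, dif_neg h1]
      omega

def wperm {k : ℕ} (σ : Equiv.Perm (Fin k)) (s : Fin k → Bool) : Fin k → ℤ :=
  fun z => if s z then ((σ z : ℕ) : ℤ) + 1 else -(((σ z : ℕ) : ℤ) + 1)

lemma wext_wperm {k : ℕ} (σ : Equiv.Perm (Fin k)) (s : Fin k → Bool) :
    ∀ i, i ≤ k → wext (wperm σ s) i = sq (aperm σ) 0 (ext s) i := by
  intro i hi
  match i with
  | 0 =>
    rw [wext, dif_neg (by omega)]
    rfl
  | (j+1) =>
    have hj : j < k := by omega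
    rw [wext, dif_pos (by constructor <;> omega)]
    show wperm σ s ⟨j+1-1, _⟩ = (if ext s j then aperm σ j else -(aperm σ j))
    rw [ext, dif_pos hj, aperm, dif_pos hj]
    rfl


lemma sdc_eq_card {k : ℕ} (w : Fin k → ℤ) :
    signedDescentCount w
      = ((Finset.range k).filter (fun z => wext w (z+1) < wext w z)).card := by
  classical
  rw [signedDescentCount, ← Nat.card_eq_finsetCard]
  exact Nat.card_congr (Equiv.subtypeEquivRight (fun z => by
    simp [Finset.mem_filter, Finset.mem_range]))

lemma sdc_le {k : ℕ} (w : Fin k → ℤ) : signedDescentCount w ≤ k := by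
  classical
  rw [sdc_eq_card]
  exact le_trans (Finset.card_filter_le _ _) (by simp)

lemma pow_sdc {k : ℕ} (w : Fin k → ℤ) :
    (-1 : ℤ) ^ signedDescentCount w
      = ∏ i ∈ Finset.range k, dterm (wext w i) (wext w (i+1)) := by
  classical
  rw [sdc_eq_card]
  have h : ∀ i ∈ Finset.range k, dterm (wext w i) (wext w (i+1))
      = if wext w (i+1) < wext w i then (-1:ℤ) else 1 := fun i _ => rfl
  rw [Finset.prod_congr rfl h, Finset.prod_ite]
  simp

lemma pow_sdc_wperm {k : ℕ} (σ : Equiv.Perm (Fin k)) (s : Fin k → Bool) :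
    (-1 : ℤ) ^ signedDescentCount (wperm σ s)
      = ∏ i ∈ Finset.range k,
          dterm (sq (aperm σ) 0 (ext s) i) (sq (aperm σ) 0 (ext s) (i+1)) := by
  rw [pow_sdc]
  refine Finset.prod_congr rfl fun i hi => ?_
  rw [Finset.mem_range] at hi
  rw [wext_wperm σ s i (by omega), wext_wperm σ s (i+1) (by omega)]

lemma wperm_isSignedPerm {k : ℕ} (σ : Equiv.Perm (Fin k)) (s : Fin k → Bool) :
    IsSignedPerm (wperm σ s) :=
  ⟨σ, fun z => by by_cases h : s z <;> simp [wperm, h]⟩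

noncomputable def Wequiv (k : ℕ) :
    (Equiv.Perm (Fin k) × (Fin k → Bool)) ≃ {w : Fin k → ℤ // IsSignedPerm w} :=
  Equiv.ofBijective (fun p => ⟨wperm p.1 p.2, wperm_isSignedPerm p.1 p.2⟩) (by
    constructor
    · rintro ⟨σ, s⟩ ⟨σ', s'⟩ h
      rw [Subtype.mk.injEq] at h
      have hz : ∀ z, wperm σ s z = wperm σ' s' z := fun z => congrFun h z
      have hσ : σ = σ' := by
        apply Equiv.ext
        intro z
        have hzz := hz z
        rw [wperm, wperm] at hzz
        have h1 : (0:ℤ) ≤ ((σ z : ℕ) : ℤ) := Int.natCast_nonneg _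
        have h2 : (0:ℤ) ≤ ((σ' z : ℕ) : ℤ) := Int.natCast_nonneg _
        apply Fin.ext
        by_cases hs : s z = true <;> by_cases hs' : s' z = true <;>
          simp only [hs, hs'] at hzz <;> simp at hzz <;> omega
      subst hσ
      have hs : s = s' := by
        funext z
        have hzz := hz z
        rw [wperm, wperm] at hzz
        have h1 : (0:ℤ) ≤ ((σ z : ℕ) : ℤ) := Int.natCast_nonneg _
        by_cases hs : s z = true <;> by_cases hs' : s' z = true <;>
          simp only [hs, hs'] at hzz ⊢ <;> simp at hzz ⊢ <;> omega
      rw [hs]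
    · rintro ⟨w, σ, hσ⟩
      refine ⟨(σ, fun z => decide (0 < w z)), ?_⟩
      apply Subtype.ext
      funext z
      rcases hσ z with h | h
      · have hpos : 0 < w z := by
          rw [h]
          have : (0:ℤ) ≤ ((σ z : ℕ) : ℤ) := Int.natCast_nonneg _
          linarith
        have hd : decide (0 < w z) = true := decide_eq_true hpos
        show (if decide (0 < w z) = true then ((σ z : ℕ) : ℤ) + 1
              else -(((σ z : ℕ) : ℤ) + 1)) = w z
        rw [hd, if_pos rfl, h]
      · have hneg : ¬ (0 < w z) := by
          rw [h]
          have : (0:ℤ) ≤ ((σ z : ℕ) : ℤ) := Int.natCast_nonneg _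
          linarith
        have hd : decide (0 < w z) = false := decide_eq_false hneg
        show (if decide (0 < w z) = true then ((σ z : ℕ) : ℤ) + 1
              else -(((σ z : ℕ) : ℤ) + 1)) = w z
        rw [hd, h]
        simp)

lemma eulerianB_card (k ℓ : ℕ) :
    eulerianBNum k ℓ
      = (Finset.univ.filter (fun p : Equiv.Perm (Fin k) × (Fin k → Bool) =>
          signedDescentCount (wperm p.1 p.2) = ℓ)).card := by
  classical
  have e1 : {w : Fin k → ℤ // IsSignedPerm w ∧ signedDescentCount w = ℓ}
      ≃ {q : {w : Fin k → ℤ // IsSignedPerm w} // signedDescentCount q.1 = ℓ} :=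
    (Equiv.subtypeSubtypeEquivSubtypeInter IsSignedPerm
      (fun w => signedDescentCount w = ℓ)).symm
  have e2 : {p : Equiv.Perm (Fin k) × (Fin k → Bool) //
        signedDescentCount (wperm p.1 p.2) = ℓ}
      ≃ {q : {w : Fin k → ℤ // IsSignedPerm w} // signedDescentCount q.1 = ℓ} :=
    Equiv.subtypeEquiv (Wequiv k) (fun p => by
      rw [show ((Wequiv k) p : Fin k → ℤ) = wperm p.1 p.2 from rfl])
  rw [eulerianBNum, Nat.card_congr (e1.trans e2.symm), Nat.card_eq_fintype_card,
    Fintype.card_subtype]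

lemma card_DU_eq_zigzag (k : ℕ) :
    Nat.card {σ : Equiv.Perm (Fin k) // DU k (aperm σ)} = zigzagNum k := by
  rw [zigzagNum]
  apply Nat.card_congr
  refine Equiv.subtypeEquiv (Equiv.mulLeft (Fin.revPerm : Equiv.Perm (Fin k)))
    (fun σ => ?_)
  have happ : ∀ (z : ℕ) (hz : z < k),
      (Equiv.mulLeft (Fin.revPerm : Equiv.Perm (Fin k)) σ) ⟨z, hz⟩
        = (σ ⟨z, hz⟩).rev := by
    intro z hz
    rfl
  have hval : ∀ (i j : ℕ) (hi : i < k) (hj : j < k),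
      (aperm σ j < aperm σ i ↔ σ ⟨j, hj⟩ < σ ⟨i, hi⟩) := by
    intro i j hi hj
    rw [aperm, aperm, dif_pos hi, dif_pos hj, Fin.lt_def]
    omega
  constructor
  · intro h z hz
    have hd := h z hz
    by_cases hev : Even z
    · have hz2 : z % 2 = 0 := Nat.even_iff.1 hev
      rw [if_pos hev] at hd
      rw [if_pos hz2, happ, happ, Fin.rev_lt_rev]
      exact (hval z (z+1) (Nat.lt_of_succ_lt hz) hz).1 hd
    · have hz2 : ¬ (z % 2 = 0) := by rw [← Nat.even_iff]; exact hev
      rw [if_neg hev] at hd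
      rw [if_neg hz2, happ, happ, Fin.rev_lt_rev]
      exact (hval (z+1) z hz (Nat.lt_of_succ_lt hz)).1 hd
  · intro h z hz
    have hd := h z hz
    by_cases hev : Even z
    · have hz2 : z % 2 = 0 := Nat.even_iff.1 hev
      rw [if_pos hz2, happ, happ, Fin.rev_lt_rev] at hd
      rw [if_pos hev]
      exact (hval z (z+1) (Nat.lt_of_succ_lt hz) hz).2 hd
    · have hz2 : ¬ (z % 2 = 0) := by rw [← Nat.even_iff]; exact hev
      rw [if_neg hz2, happ, happ, Fin.rev_lt_rev] at hd
      rw [if_neg hev]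
      exact (hval (z+1) z hz (Nat.lt_of_succ_lt hz)).2 hd

end Stmt17

open Stmt17 in
/-- `Σ_{ℓ=0}^{k} (−1)^ℓ · ⟨B_k, ℓ⟩` equals `0` for odd `k` and
`(−1)^(k/2) · 2^k · E_k` for even `k`. -/
theorem stmt17 (k : ℕ) (hk : 1 ≤ k) :
    ∑ ℓ ∈ Finset.range (k + 1), (-1 : ℤ) ^ ℓ * (eulerianBNum k ℓ : ℤ) =
    if Odd k then 0 else (-1 : ℤ) ^ (k / 2) * 2 ^ k * (zigzagNum k : ℤ) := by
  classical
  -- Step 1: LHS as a sum over all pairs (σ, signs)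
  have h1 : ∑ ℓ ∈ Finset.range (k + 1), (-1 : ℤ) ^ ℓ * (eulerianBNum k ℓ : ℤ)
      = ∑ p : Equiv.Perm (Fin k) × (Fin k → Bool),
          (-1 : ℤ) ^ signedDescentCount (wperm p.1 p.2) := by
    rw [← Finset.sum_fiberwise_of_maps_to (t := Finset.range (k+1))
      (g := fun p : Equiv.Perm (Fin k) × (Fin k → Bool) =>
        signedDescentCount (wperm p.1 p.2))
      (fun p _ => Finset.mem_range.2 (Nat.lt_succ_of_le (sdc_le _)))
      (fun p => (-1 : ℤ) ^ signedDescentCount (wperm p.1 p.2))]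
    refine Finset.sum_congr rfl fun ℓ _ => ?_
    rw [eulerianB_card]
    have hsc : ∑ p ∈ Finset.univ.filter (fun p : Equiv.Perm (Fin k) × (Fin k → Bool) =>
          signedDescentCount (wperm p.1 p.2) = ℓ),
        (-1:ℤ) ^ signedDescentCount (wperm p.1 p.2)
      = ∑ p ∈ Finset.univ.filter (fun p : Equiv.Perm (Fin k) × (Fin k → Bool) =>
          signedDescentCount (wperm p.1 p.2) = ℓ), (-1:ℤ) ^ ℓ :=
      Finset.sum_congr rfl (fun p hp => by rw [(Finset.mem_filter.1 hp).2])
    rw [hsc, Finset.sum_const, nsmul_eq_mul]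
    ring
  -- Step 2: the inner sum over signs equals Phi
  have h2 : ∑ p : Equiv.Perm (Fin k) × (Fin k → Bool),
        (-1 : ℤ) ^ signedDescentCount (wperm p.1 p.2)
      = ∑ σ : Equiv.Perm (Fin k), Phi k (aperm σ) := by
    rw [Fintype.sum_prod_type]
    refine Finset.sum_congr rfl fun σ _ => ?_
    rw [← S_zero_eq_Phi k (aperm σ) (aperm_pos σ) (aperm_ne σ), S_eq_sum]
    exact Finset.sum_congr rfl fun s _ => pow_sdc_wperm σ s
  rw [h1, h2]
  by_cases hodd : Odd k
  · have hne : ¬ Even k := Nat.not_even_iff_odd.2 hodd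
    rw [if_pos hodd]
    refine Finset.sum_eq_zero fun σ _ => ?_
    rw [Phi, if_neg (by tauto)]
  · have hev : Even k := Nat.not_odd_iff_even.1 hodd
    rw [if_neg hodd]
    have h3 : ∀ σ : Equiv.Perm (Fin k), Phi k (aperm σ)
        = if DU k (aperm σ) then (-1 : ℤ) ^ (k / 2) * 2 ^ k else 0 := by
      intro σ
      rw [Phi]
      by_cases h : DU k (aperm σ)
      · rw [if_pos ⟨hev, h⟩, if_pos h]
      · rw [if_neg (by tauto), if_neg h]
    have hsplit : ∑ σ : Equiv.Perm (Fin k), Phi k (aperm σ)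
        = ((Finset.univ.filter (fun σ : Equiv.Perm (Fin k) => DU k (aperm σ))).card : ℤ)
          * ((-1 : ℤ) ^ (k / 2) * 2 ^ k) := by
      rw [Finset.sum_congr rfl fun σ _ => h3 σ, ← Finset.sum_filter, Finset.sum_const,
        nsmul_eq_mul]
    have hcard : (Finset.univ.filter (fun σ : Equiv.Perm (Fin k) => DU k (aperm σ))).card
        = zigzagNum k := by
      rw [← card_DU_eq_zigzag k, Nat.card_eq_fintype_card, Fintype.card_subtype]
    rw [hsplit, hcard]
    ring
end

section
/- Let k ≥ 1 and 0 ≤ ℓ ≤ k be integers. Then the type-B Eulerian number ⟨B_k, ℓ⟩ satisfies ⟨B_k, ℓ⟩ = 2^k · k! · (F_k(ℓ + 1/2) − F_k(ℓ − 1/2)). -/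
/-- The cumulative distribution function of the Irwin–Hall distribution:
`F k x = (1/k!) · Σ_{j=0}^{⌊x⌋} (-1)^j · binom(k,j) · (x-j)^k` for `x ≥ 0`, and `0` for
`x < 0`. -/
noncomputable def irwinHallF (k : ℕ) (x : ℝ) : ℝ :=
  if x < 0 then 0
  else (1 / (k.factorial : ℝ)) *
    ∑ j ∈ Finset.range (⌊x⌋.toNat + 1), (-1 : ℝ) ^ j * (k.choose j : ℝ) * (x - j) ^ k

open Finset

/-- descent set as a Finset -/
def dSet {k : ℕ} (w : Fin k → ℤ) : Finset ℕ :=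
  (range k).filter (fun z => wext w (z + 1) < wext w z)

lemma sdc_eq_card {k : ℕ} (w : Fin k → ℤ) :
    signedDescentCount w = (dSet w).card := by
  rw [signedDescentCount, ← Nat.card_eq_finsetCard]
  exact Nat.card_congr (Equiv.subtypeEquivRight (by simp [dSet, Finset.mem_filter, and_comm]))

lemma dSet_card_le {k : ℕ} (w : Fin k → ℤ) : (dSet w).card ≤ k := by
  calc (dSet w).card ≤ (range k).card := Finset.card_le_card (Finset.filter_subset _ _)
  _ = k := Finset.card_range k

lemma wext_bound {k : ℕ} {w : Fin k → ℤ} (hw : IsSignedPerm w) (j : ℕ) :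
    -(k : ℤ) ≤ wext w j ∧ wext w j ≤ k := by
  obtain ⟨σ, hσ⟩ := hw
  unfold wext
  split
  · next h =>
    rcases hσ ⟨j - 1, h.1⟩ with h' | h' <;> rw [h'] <;>
      have := (σ ⟨j - 1, h.1⟩).isLt <;> constructor <;> push_cast <;> omega
  · constructor <;> simp

/-- insert value `v` at position `p` -/
def sins {k : ℕ} (w : Fin k → ℤ) (p : Fin (k + 1)) (v : ℤ) : Fin (k + 1) → ℤ :=
  fun j => if h1 : j.val < p.val then w ⟨j.val, by omega⟩
    else if h2 : j.val = p.val then v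
    else w ⟨j.val - 1, by have := j.isLt; have := p.isLt; omega⟩

lemma sins_self {k : ℕ} (w : Fin k → ℤ) (p : Fin (k + 1)) (v : ℤ) :
    sins w p v p = v := by
  simp [sins]

lemma sins_succAbove {k : ℕ} (w : Fin k → ℤ) (p : Fin (k + 1)) (v : ℤ) (i : Fin k) :
    sins w p v (p.succAbove i) = w i := by
  unfold sins
  rcases lt_or_ge (i.castSucc) p with h | h
  · rw [Fin.succAbove_of_castSucc_lt _ _ h]
    rw [dif_pos (show (i.castSucc).val < p.val from h)]
    exact congrArg w (Fin.ext (by simp))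
  · rw [Fin.succAbove_of_le_castSucc _ _ h]
    have hv : p.val ≤ i.val := h
    rw [dif_neg (by simp only [Fin.val_succ]; omega),
        dif_neg (by simp only [Fin.val_succ]; omega)]
    exact congrArg w (Fin.ext (by simp only [Fin.val_succ, Fin.val_mk]; omega))

lemma wext_sins {k : ℕ} (w : Fin k → ℤ) (p : Fin (k + 1)) (v : ℤ) (j : ℕ) :
    wext (sins w p v) j =
      if j ≤ p.val then wext w j
      else if j = p.val + 1 then v
      else wext w (j - 1) := by
  have hp : p.val ≤ k := by have := p.isLt; omega
  rcases j with _ | j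
  · simp [wext]
  · unfold wext sins
    simp only [Fin.val_mk]
    split_ifs <;> first
      | rfl
      | omega
      | (apply congrArg w; apply Fin.ext; simp only [Fin.val_mk]; omega)

def sval (s : Bool) (n : ℕ) : ℤ := if s then (n : ℤ) else -(n : ℤ)

lemma sp_sins {k : ℕ} {w : Fin k → ℤ} (hw : IsSignedPerm w) (p : Fin (k + 1)) (s : Bool) :
    IsSignedPerm (sins w p (sval s (k + 1))) := by
  obtain ⟨σ, hσ⟩ := hw
  refine ⟨(finSuccEquiv' p).trans ((Equiv.optionCongr σ).trans
      (finSuccEquiv' (Fin.last k)).symm), ?_⟩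
  intro z
  rcases eq_or_ne z p with rfl | hz
  · simp only [Equiv.trans_apply, finSuccEquiv'_at, Equiv.optionCongr_apply, Option.map_none,
      finSuccEquiv'_symm_none, sins_self]
    rcases s with _ | _
    · right; simp [sval, Fin.val_last]
    · left; simp [sval, Fin.val_last]
  · obtain ⟨i, rfl⟩ := Fin.exists_succAbove_eq hz
    simp only [Equiv.trans_apply, finSuccEquiv'_succAbove, Equiv.optionCongr_apply,
      Option.map_some, finSuccEquiv'_symm_some, Fin.succAbove_last, sins_succAbove,
      Fin.coe_castSucc]
    exact hσ i

lemma sp_bound {k : ℕ} {w : Fin k → ℤ} (hw : IsSignedPerm w) (i : Fin k) :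
    -(k : ℤ) ≤ w i ∧ w i ≤ k := by
  obtain ⟨σ, hσ⟩ := hw
  rcases hσ i with h | h <;> rw [h] <;> have := (σ i).isLt <;> constructor <;> push_cast <;> omega

/-- the insertion map on triples -/
noncomputable def insMap (k : ℕ) :
    ({w : Fin k → ℤ // IsSignedPerm w} × (Fin (k + 1) × Bool)) →
    {u : Fin (k + 1) → ℤ // IsSignedPerm u} :=
  fun x => ⟨sins x.1.1 x.2.1 (sval x.2.2 (k + 1)), sp_sins x.1.2 x.2.1 x.2.2⟩

lemma insMap_injective (k : ℕ) : Function.Injective (insMap k) := by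
  rintro ⟨⟨w, hw⟩, p, s⟩ ⟨⟨w', hw'⟩, p', s'⟩ h
  have he : sins w p (sval s (k+1)) = sins w' p' (sval s' (k+1)) := congrArg Subtype.val h
  have hpp : p = p' := by
    by_contra hne
    obtain ⟨i, hi⟩ := Fin.exists_succAbove_eq hne
    have h1 : sins w' p' (sval s' (k+1)) p = w' i := by rw [← hi, sins_succAbove]
    have h2 := sp_bound hw' i
    have := congrFun he p
    rw [sins_self, h1] at this
    rcases s with _ | _ <;> simp [sval] at this <;> omega
  subst hpp
  have hvv : sval s (k+1) = sval s' (k+1) := by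
    have := congrFun he p
    rwa [sins_self, sins_self] at this
  have hss : s = s' := by
    rcases s with _ | _ <;> rcases s' with _ | _ <;> simp [sval] at hvv ⊢ <;> omega
  subst hss
  have hww : w = w' := by
    funext i
    have := congrFun he (p.succAbove i)
    rwa [sins_succAbove, sins_succAbove] at this
  simp [hww]

lemma insMap_surjective (k : ℕ) : Function.Surjective (insMap k) := by
  rintro ⟨u, hu⟩
  obtain ⟨σ, hσ⟩ := hu
  set p := σ.symm (Fin.last k) with hp
  have hσp : σ p = Fin.last k := by simp [hp]
  -- the deleted word
  set w : Fin k → ℤ := fun i => u (p.succAbove i) with hwdef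
  -- w is a signed permutation
  have hwsp : IsSignedPerm w := by
    have hinj : Function.Injective
        (fun i : Fin k => (⟨(σ (p.succAbove i)).val, by
          have hne : σ (p.succAbove i) ≠ Fin.last k := by
            rw [← hσp]
            exact fun hc => Fin.succAbove_ne p i (σ.injective hc)
          exact Fin.val_lt_last hne⟩ : Fin k)) := by
      intro a b hab
      simp only [Fin.mk.injEq] at hab
      exact Fin.succAbove_right_injective (σ.injective (Fin.ext hab))
    refine ⟨Equiv.ofBijective _ (Finite.injective_iff_bijective.mp hinj), ?_⟩
    intro i
    have := hσ (p.succAbove i)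
    simpa [Equiv.ofBijective] using this
  refine ⟨⟨⟨w, hwsp⟩, p, decide (0 < u p)⟩, ?_⟩
  apply Subtype.ext
  simp only [insMap]
  funext j
  rcases eq_or_ne j p with rfl | hj
  · rw [sins_self]
    have hup := hσ p
    rw [hσp] at hup
    simp only [Fin.val_last] at hup
    rcases hup with h | h <;> rw [h] <;> simp [sval] <;> push_cast <;> omega
  · obtain ⟨i, rfl⟩ := Fin.exists_succAbove_eq hj
    rw [sins_succAbove]

instance instFinSPW (k : ℕ) : Finite {w : Fin k → ℤ // IsSignedPerm w} := by
  have hs : Function.Surjective (fun x : Equiv.Perm (Fin k) × (Fin k → Bool) =>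
      (⟨fun z => if x.2 z then ((x.1 z : ℕ) : ℤ) + 1 else -(((x.1 z : ℕ) : ℤ) + 1),
        ⟨x.1, fun z => by dsimp only; rcases x.2 z with _ | _ <;> simp⟩⟩ :
        {w : Fin k → ℤ // IsSignedPerm w})) := by
    rintro ⟨w, σ, hσ⟩
    refine ⟨⟨σ, fun z => decide (0 < w z)⟩, Subtype.ext ?_⟩
    funext z
    rcases hσ z with h | h <;> simp only [h, decide_eq_true_eq]
    · rw [if_pos (by positivity)]
    · rw [if_neg (by omega)]
  exact Finite.of_surjective _ hs

def keepP {k : ℕ} (w : Fin k → ℤ) (p : Fin (k + 1)) (s : Bool) : Prop :=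
  (p.val < k ∧ wext w (p.val + 1) < wext w p.val) ∨ (p.val = k ∧ s = true)

instance {k : ℕ} (w : Fin k → ℤ) (p : Fin (k + 1)) (s : Bool) : Decidable (keepP w p s) := by
  unfold keepP; infer_instance

lemma card_dSet_sins {k : ℕ} {w : Fin k → ℤ} (hw : IsSignedPerm w) (p : Fin (k + 1)) (s : Bool) :
    (dSet (sins w p (sval s (k + 1)))).card
      = (dSet w).card + (if keepP w p s then 0 else 1) := by
  have hp : p.val ≤ k := by have := p.isLt; omega
  set v : ℤ := sval s (k + 1) with hv
  set u : Fin (k + 1) → ℤ := sins w p v with hu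
  set P := p.val with hP
  have hwb := wext_bound hw
  have hvb : (v = (k:ℤ) + 1 ∧ s = true) ∨ (v = -((k:ℤ) + 1) ∧ s = false) := by
    rcases s with _ | _ <;> simp [hv, sval] <;> push_cast <;> ring
  set fI : ℕ → ℕ := fun z => if wext u (z + 1) < wext u z then 1 else 0 with hfI
  set gI : ℕ → ℕ := fun z => if wext w (z + 1) < wext w z then 1 else 0 with hgI
  have hcard_u : (dSet u).card = ∑ z ∈ range (k + 1), fI z := by
    rw [dSet, Finset.card_filter]
  have hcard_w : (dSet w).card = ∑ z ∈ range k, gI z := by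
    rw [dSet, Finset.card_filter]
  have hg01 : ∀ z, gI z = 0 ∨ gI z = 1 := by
    intro z; rw [hgI]; dsimp only; split_ifs <;> simp
  -- pointwise values of wext u
  have hwu : ∀ j, wext u j = if j ≤ P then wext w j else if j = P + 1 then v
      else wext w (j - 1) := fun j => wext_sins w p v j
  have hflow : ∀ z < P, fI z = gI z := by
    intro z hz
    rw [hfI, hgI]; dsimp only
    rw [hwu z, hwu (z+1), if_pos (show z + 1 ≤ P by omega), if_pos (show z ≤ P by omega)]
  have hfP : fI P = if v < wext w P then 1 else 0 := by
    rw [hfI]; dsimp only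
    rw [hwu P, hwu (P+1), if_neg (show ¬ (P + 1 ≤ P) by omega),
      if_pos (show P + 1 = P + 1 from rfl), if_pos (show P ≤ P from le_refl P)]
  have hfhigh : ∀ z, P + 1 ≤ z → fI (z + 1) = gI z := by
    intro z hz
    rw [hfI, hgI]; dsimp only
    rw [hwu (z+1), hwu (z+2), if_neg (show ¬ (z + 1 + 1 ≤ P) by omega),
      if_neg (show ¬ (z + 1 + 1 = P + 1) by omega),
      if_neg (show ¬ (z + 1 ≤ P) by omega), if_neg (show ¬ (z + 1 = P + 1) by omega),
      show z + 1 + 1 - 1 = z + 1 by omega, show z + 1 - 1 = z by omega]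
  have split1 : ∑ z ∈ range (k + 1), fI z
      = ∑ z ∈ Finset.Ico 0 P, gI z + fI P + ∑ z ∈ Finset.Ico (P+1) (k+1), fI z := by
    rw [range_eq_Ico, ← Finset.sum_Ico_consecutive _ (Nat.zero_le (P+1)) (by omega),
      Finset.sum_Ico_succ_top (Nat.zero_le P)]
    congr 1
    congr 1
    exact Finset.sum_congr rfl (fun z hz => hflow z (by simpa using (Finset.mem_Ico.mp hz).2))
  have split2 : ∑ z ∈ Finset.Ico (P+1) (k+1), fI z = ∑ z ∈ Finset.Ico P k, fI (z + 1) := by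
    rw [Finset.sum_Ico_eq_sum_range, Finset.sum_Ico_eq_sum_range]
    have : k + 1 - (P + 1) = k - P := by omega
    rw [this]
    exact Finset.sum_congr rfl (fun i _ => by congr 1; omega)
  have hw_split : ∑ z ∈ range k, gI z
      = ∑ z ∈ Finset.Ico 0 P, gI z + ∑ z ∈ Finset.Ico P k, gI z := by
    rw [range_eq_Ico, ← Finset.sum_Ico_consecutive _ (Nat.zero_le P) (by omega)]
  rcases eq_or_lt_of_le hp with hPk | hPk
  · -- P = k : insertion at the end
    have hico : Finset.Ico (P+1) (k+1) = ∅ := by rw [hPk]; simp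
    have hico2 : Finset.Ico P k = ∅ := by rw [hPk]; simp
    rw [hcard_u, hcard_w, split1, hico, hw_split, hico2, Finset.sum_empty, Finset.sum_empty]
    have hkeep : keepP w p s ↔ s = true := by
      unfold keepP; rw [← hP, hPk]; simp
    rcases hvb with ⟨hv1, hs1⟩ | ⟨hv1, hs1⟩ <;> subst hs1
    · rw [hfP, if_neg (by have := (hwb P).2; omega), if_pos (hkeep.mpr rfl)]
      try omega
    · rw [hfP, if_pos (by have := (hwb P).1; omega), if_neg (by rw [hkeep]; simp)]
      try omega
  · -- P < k
    have hbot1 : ∑ z ∈ Finset.Ico P k, fI (z + 1)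
        = fI (P + 1) + ∑ z ∈ Finset.Ico (P+1) k, fI (z + 1) :=
      Finset.sum_eq_sum_Ico_succ_bot hPk _
    have hbot2 : ∑ z ∈ Finset.Ico P k, gI z = gI P + ∑ z ∈ Finset.Ico (P+1) k, gI z :=
      Finset.sum_eq_sum_Ico_succ_bot hPk _
    have htails : ∑ z ∈ Finset.Ico (P+1) k, fI (z + 1) = ∑ z ∈ Finset.Ico (P+1) k, gI z :=
      Finset.sum_congr rfl (fun z hz => hfhigh z (Finset.mem_Ico.mp hz).1)
    have hfP1 : fI (P + 1) = if wext w (P + 1) < v then 1 else 0 := by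
      rw [hfI]; dsimp only
      rw [hwu (P+1), hwu (P+2), if_neg (show ¬ (P + 2 ≤ P) by omega),
        if_neg (show ¬ (P + 2 = P + 1) by omega),
        if_neg (show ¬ (P + 1 ≤ P) by omega), if_pos (show P + 1 = P + 1 from rfl),
        show P + 2 - 1 = P + 1 by omega]
    have hkeep : keepP w p s ↔ gI P = 1 := by
      unfold keepP
      rw [hgI, ← hP]
      constructor
      · rintro (⟨_, hd⟩ | ⟨hc, _⟩)
        · simp [hd]
        · omega
      · intro hd
        left
        refine ⟨hPk, ?_⟩
        by_contra hc
        simp only [if_neg hc] at hd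
        exact absurd hd (by omega)
    rw [hcard_u, hcard_w, split1, split2, hbot1, htails, hw_split, hbot2]
    have hmain : fI P + fI (P + 1) = gI P + (if keepP w p s then 0 else 1) := by
      rcases hvb with ⟨hv1, _⟩ | ⟨hv1, _⟩
      · rw [hfP, if_neg (by have := (hwb P).2; omega),
          hfP1, if_pos (by have := (hwb (P+1)).2; omega)]
        rcases hg01 P with h0 | h1
        · rw [h0, if_neg (by rw [hkeep]; omega)]
        · rw [h1, if_pos (hkeep.mpr h1)]
      · rw [hfP, if_pos (by have := (hwb P).1; omega),
          hfP1, if_neg (by have := (hwb (P+1)).1; omega)]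
        rcases hg01 P with h0 | h1
        · rw [h0, if_neg (by rw [hkeep]; omega)]
        · rw [h1, if_pos (hkeep.mpr h1)]
    omega

lemma eulerianB_eq_card (k ℓ : ℕ) :
    eulerianBNum k ℓ
      = Nat.card {x : {w : Fin k → ℤ // IsSignedPerm w} // (dSet x.1).card = ℓ} := by
  rw [eulerianBNum]
  refine Nat.card_congr ((Equiv.subtypeEquivRight (fun w => ?_)).trans
    (Equiv.subtypeSubtypeEquivSubtypeInter IsSignedPerm
      (fun w => (dSet w).card = ℓ)).symm)
  rw [sdc_eq_card]

lemma E_gt (k ℓ : ℕ) (h : k < ℓ) : eulerianBNum k ℓ = 0 := by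
  rw [eulerianB_eq_card]
  have : IsEmpty {x : {w : Fin k → ℤ // IsSignedPerm w} // (dSet x.1).card = ℓ} := by
    refine ⟨fun x => ?_⟩
    have := dSet_card_le x.1.1
    omega
  simp [Nat.card_of_isEmpty]

lemma keep_count {k : ℕ} (w : Fin k → ℤ) :
    ((Finset.univ : Finset (Fin (k+1) × Bool)).filter (fun b => keepP w b.1 b.2)).card
      = 2 * (dSet w).card + 1 := by
  have hset : (Finset.univ : Finset (Fin (k+1) × Bool)).filter (fun b => keepP w b.1 b.2)
      = ((Finset.univ.filter
            (fun p : Fin (k+1) => p.val < k ∧ wext w (p.val+1) < wext w p.val)) ×ˢ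
          (Finset.univ : Finset Bool)) ∪ {(Fin.last k, true)} := by
    ext ⟨p, s⟩
    have hlast : (p = Fin.last k) ↔ (p.val = k) := by rw [Fin.ext_iff, Fin.val_last]
    rw [Finset.mem_filter_univ]
    simp only [Finset.mem_filter, Finset.mem_univ, true_and, Finset.mem_union,
      Finset.mem_product, Finset.mem_singleton, Prod.ext_iff, keepP, hlast]
    tauto
  rw [hset, Finset.card_union_of_disjoint, Finset.card_product]
  · have hbij : (Finset.univ.filter
        (fun p : Fin (k+1) => p.val < k ∧ wext w (p.val+1) < wext w p.val)).card
        = (dSet w).card := by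
      refine Finset.card_bij' (fun p _ => p.val) (fun z hz => ⟨z, by
        simp only [dSet, Finset.mem_filter, Finset.mem_range] at hz; omega⟩) ?_ ?_ ?_ ?_
      · intro p hp
        simp only [Finset.mem_filter, Finset.mem_univ, true_and] at hp
        simp only [dSet, Finset.mem_filter, Finset.mem_range]
        exact ⟨hp.1, hp.2⟩
      · intro z hz
        simp only [dSet, Finset.mem_filter, Finset.mem_range] at hz
        simp only [Finset.mem_filter, Finset.mem_univ, true_and]
        exact ⟨hz.1, hz.2⟩
      · intro p hp; rfl
      · intro z hz; rfl
    rw [hbij]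
    simp only [Finset.card_univ, Fintype.card_bool, Finset.card_singleton]
    ring
  · rw [Finset.disjoint_singleton_right]
    simp [Fin.val_last]

lemma inner_count {k : ℕ} (w : Fin k → ℤ) (m : ℕ) :
    ((Finset.univ : Finset (Fin (k+1) × Bool)).filter
        (fun b => (dSet w).card + (if keepP w b.1 b.2 then 0 else 1) = m)).card
      = if (dSet w).card = m then 2 * m + 1
        else if (dSet w).card + 1 = m then 2 * k + 1 - 2 * (dSet w).card else 0 := by
  have hd := dSet_card_le w
  by_cases h1 : (dSet w).card = m
  · rw [if_pos h1]
    have : ∀ b : Fin (k+1) × Bool,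
        ((dSet w).card + (if keepP w b.1 b.2 then 0 else 1) = m) ↔ keepP w b.1 b.2 := by
      intro b; split_ifs with hk <;> simp [hk] <;> omega
    rw [Finset.filter_congr (fun b _ => this b), keep_count, h1]
  · rw [if_neg h1]
    by_cases h2 : (dSet w).card + 1 = m
    · rw [if_pos h2]
      have : ∀ b : Fin (k+1) × Bool,
          ((dSet w).card + (if keepP w b.1 b.2 then 0 else 1) = m) ↔ ¬ keepP w b.1 b.2 := by
        intro b; split_ifs with hk <;> simp [hk] <;> omega
      rw [Finset.filter_congr (fun b _ => this b)]
      have h3 := Finset.card_filter_add_card_filter_not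
        (s := (Finset.univ : Finset (Fin (k+1) × Bool))) (p := fun b => keepP w b.1 b.2)
      have hbeta : (Finset.univ.filter (fun a : Fin (k+1) × Bool =>
          ¬(fun b : Fin (k+1) × Bool => keepP w b.1 b.2) a))
          = Finset.univ.filter (fun b : Fin (k+1) × Bool => ¬ keepP w b.1 b.2) := rfl
      rw [hbeta] at h3
      have hkc := keep_count w
      have huniv : (Finset.univ : Finset (Fin (k+1) × Bool)).card = 2 * (k + 1) := by
        simp [Finset.card_univ]; ring
      omega
    · rw [if_neg h2, Finset.card_eq_zero]
      apply Finset.filter_false_of_mem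
      intro b _
      split_ifs <;> omega

noncomputable instance instFtSPW (k : ℕ) : Fintype {w : Fin k → ℤ // IsSignedPerm w} :=
  Fintype.ofFinite _

lemma sum_ite_card {A : Type*} [Fintype A] (P : A → Prop) [DecidablePred P] (c : ℕ) :
    (∑ a : A, if P a then c else 0) = c * Nat.card {a // P a} := by
  rw [Nat.card_eq_fintype_card, Fintype.card_subtype, ← Finset.sum_filter,
    Finset.sum_const, smul_eq_mul, mul_comm]

lemma E_master (k m : ℕ) :
    eulerianBNum (k+1) m =
      ∑ a : {w : Fin k → ℤ // IsSignedPerm w},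
        (if (dSet a.1).card = m then 2 * m + 1
         else if (dSet a.1).card + 1 = m then 2 * k + 1 - 2 * (dSet a.1).card else 0) := by
  rw [eulerianB_eq_card]
  have hbij : Function.Bijective (insMap k) := ⟨insMap_injective k, insMap_surjective k⟩
  have h1 : Nat.card {x : {u : Fin (k+1) → ℤ // IsSignedPerm u} // (dSet x.1).card = m}
      = Nat.card {y : {w : Fin k → ℤ // IsSignedPerm w} × (Fin (k+1) × Bool) //
          (dSet y.1.1).card + (if keepP y.1.1 y.2.1 y.2.2 then 0 else 1) = m} := by
    refine Nat.card_congr ((Equiv.subtypeEquiv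
      (p := fun y : {w : Fin k → ℤ // IsSignedPerm w} × (Fin (k+1) × Bool) =>
        (dSet y.1.1).card + (if keepP y.1.1 y.2.1 y.2.2 then 0 else 1) = m)
      (q := fun x : {u : Fin (k+1) → ℤ // IsSignedPerm u} => (dSet x.1).card = m)
      (Equiv.ofBijective _ hbij) (fun y => ?_)).symm)
    show (dSet y.1.1).card + _ = m ↔ (dSet ((insMap k y).1)).card = m
    rw [show ((insMap k y).1) = sins y.1.1 y.2.1 (sval y.2.2 (k+1)) from rfl,
      card_dSet_sins y.1.2]
  rw [h1, Nat.card_congr (Equiv.subtypeProdEquivSigmaSubtype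
    (fun (a : {w : Fin k → ℤ // IsSignedPerm w}) (b : Fin (k+1) × Bool) =>
      (dSet a.1).card + (if keepP a.1 b.1 b.2 then 0 else 1) = m)),
    Nat.card_eq_fintype_card, Fintype.card_sigma]
  refine Finset.sum_congr rfl (fun a _ => ?_)
  rw [Fintype.card_subtype, inner_count]

lemma E_zero_succ (k : ℕ) : eulerianBNum (k+1) 0 = eulerianBNum k 0 := by
  rw [E_master, eulerianB_eq_card]
  have : ∀ a : {w : Fin k → ℤ // IsSignedPerm w},
      (if (dSet a.1).card = 0 then 2 * 0 + 1
        else if (dSet a.1).card + 1 = 0 then 2 * k + 1 - 2 * (dSet a.1).card else 0)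
      = (if (dSet a.1).card = 0 then 1 else 0) := by
    intro a
    by_cases h : (dSet a.1).card = 0 <;> simp [h]
  rw [Finset.sum_congr rfl (fun a _ => this a), sum_ite_card, one_mul]

lemma E_rec (k m : ℕ) :
    eulerianBNum (k+1) (m+1)
      = (2 * m + 3) * eulerianBNum k (m+1) + (2 * k + 1 - 2 * m) * eulerianBNum k m := by
  rw [E_master]
  have : ∀ a : {w : Fin k → ℤ // IsSignedPerm w},
      (if (dSet a.1).card = m+1 then 2 * (m+1) + 1
        else if (dSet a.1).card + 1 = m+1 then 2 * k + 1 - 2 * (dSet a.1).card else 0)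
      = (if (dSet a.1).card = m+1 then 2 * m + 3 else 0)
        + (if (dSet a.1).card = m then 2 * k + 1 - 2 * m else 0) := by
    intro a
    by_cases h1 : (dSet a.1).card = m + 1 <;> by_cases h2 : (dSet a.1).card = m <;>
      simp [h1, h2] <;> omega
  rw [Finset.sum_congr rfl (fun a _ => this a), Finset.sum_add_distrib,
    sum_ite_card, sum_ite_card, eulerianB_eq_card k (m+1), eulerianB_eq_card k m]

lemma E_zero_zero : eulerianBNum 0 0 = 1 := by
  rw [eulerianB_eq_card]
  have hne : Nonempty {x : {w : Fin 0 → ℤ // IsSignedPerm w} // (dSet x.1).card = 0} := by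
    refine ⟨⟨⟨Fin.elim0, ⟨Equiv.refl _, fun z => z.elim0⟩⟩, ?_⟩⟩
    simp [dSet]
  have hsub : Subsingleton {x : {w : Fin 0 → ℤ // IsSignedPerm w} // (dSet x.1).card = 0} :=
    ⟨fun a b => Subtype.ext (Subtype.ext (funext fun z => z.elim0))⟩
  rw [Nat.card_eq_one_iff_unique]
  exact ⟨hsub, hne⟩

noncomputable def TB (k ℓ : ℕ) : ℝ :=
  ∑ j ∈ range (ℓ + 1), (-1 : ℝ) ^ j * ((k+1).choose j : ℝ) * (2 * (ℓ:ℝ) + 1 - 2 * j) ^ k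

lemma sum_shift (F : ℕ → ℝ) (n : ℕ) (h0 : F 0 = 0) :
    ∑ j ∈ range (n + 1), F j = ∑ i ∈ range n, F (i + 1) := by
  rw [Finset.sum_range_succ', h0, add_zero]

lemma TB_zero (k : ℕ) : TB k 0 = 1 := by
  simp [TB]

lemma TB_zero_succ (ℓ : ℕ) : TB 0 (ℓ + 1) = 0 := by
  rw [TB]
  rw [← Finset.sum_subset (Finset.range_subset_range.mpr (by omega : 2 ≤ ℓ + 1 + 1))]
  · simp [Finset.sum_range_succ]
  · intro j _ hj
    rw [Finset.mem_range, not_lt] at hj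
    rw [Nat.choose_eq_zero_of_lt (by omega : 1 < j)]
    simp

lemma TB_rec (k ℓ : ℕ) :
    TB (k+1) (ℓ+1) = (2 * (ℓ:ℝ) + 3) * TB k (ℓ+1) + (2 * (k:ℝ) + 1 - 2 * ℓ) * TB k ℓ := by
  set y : ℕ → ℝ := fun j => 2 * (ℓ:ℝ) + 3 - 2 * j with hy
  have hyv : ∀ j : ℕ, 2 * ((ℓ:ℝ)+1) + 1 - 2 * j = y j := by intro j; rw [hy]; ring
  have hstepA : ∑ j ∈ range (ℓ+2), (-1:ℝ)^j * ((k+2).choose j : ℝ) * y j ^ k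
      = TB k (ℓ+1) - TB k ℓ := by
    have hsplit : ∀ j ∈ range (ℓ+2), (-1:ℝ)^j * ((k+2).choose j : ℝ) * y j ^ k
        = (-1:ℝ)^j * ((k+1).choose j : ℝ) * y j ^ k
          + (-1:ℝ)^j * (((k+2).choose j : ℝ) - ((k+1).choose j : ℝ)) * y j ^ k := by
      intro j _; ring
    rw [Finset.sum_congr rfl hsplit, Finset.sum_add_distrib]
    have h1 : ∑ j ∈ range (ℓ+2), (-1:ℝ)^j * ((k+1).choose j : ℝ) * y j ^ k
        = TB k (ℓ+1) := by
      rw [TB]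
      refine Finset.sum_congr (by norm_num) (fun j _ => ?_)
      simp only [hy]
      push_cast
      ring
    have h2 : ∑ j ∈ range (ℓ+2),
        (-1:ℝ)^j * (((k+2).choose j : ℝ) - ((k+1).choose j : ℝ)) * y j ^ k = - TB k ℓ := by
      rw [sum_shift _ _ (by simp)]
      have hterm : ∀ i ∈ range (ℓ+1),
          (-1:ℝ)^(i+1) * (((k+2).choose (i+1) : ℝ) - ((k+1).choose (i+1) : ℝ)) * y (i+1) ^ k
          = -((-1:ℝ)^i * ((k+1).choose i : ℝ) * (2 * (ℓ:ℝ) + 1 - 2 * i) ^ k) := by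
        intro i _
        have hc : (k+2).choose (i+1) = (k+1).choose i + (k+1).choose (i+1) :=
          Nat.choose_succ_succ (k+1) i
        have hyi : y (i+1) = 2 * (ℓ:ℝ) + 1 - 2 * i := by rw [hy]; push_cast; ring
        rw [hc, hyi]
        push_cast
        ring
      rw [Finset.sum_congr rfl hterm, Finset.sum_neg_distrib, TB]
    rw [h1, h2]
    ring
  have hstepB : ∑ j ∈ range (ℓ+2), (-1:ℝ)^j * (j : ℝ) * ((k+2).choose j : ℝ) * y j ^ k
      = -((k:ℝ)+2) * TB k ℓ := by
    rw [sum_shift _ _ (by simp)]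
    have hterm : ∀ i ∈ range (ℓ+1),
        (-1:ℝ)^(i+1) * ((i+1 : ℕ) : ℝ) * ((k+2).choose (i+1) : ℝ) * y (i+1) ^ k
        = -((k:ℝ)+2) * ((-1:ℝ)^i * ((k+1).choose i : ℝ) * (2 * (ℓ:ℝ) + 1 - 2 * i) ^ k) := by
      intro i _
      have hc : (k + 2) * ((k+1).choose i) = (k+2).choose (i+1) * (i+1) := by
        have := Nat.add_one_mul_choose_eq (k+1) i
        simpa using this
      have hyi : y (i+1) = 2 * (ℓ:ℝ) + 1 - 2 * i := by rw [hy]; push_cast; ring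
      have hcr : ((k:ℝ)+2) * ((k+1).choose i : ℝ) = ((k+2).choose (i+1) : ℝ) * ((i:ℝ)+1) := by
        have := congrArg (fun n : ℕ => (n : ℝ)) hc
        push_cast at this
        linarith [this]
      rw [hyi]
      push_cast
      linear_combination ((-1:ℝ)^i * (2 * (ℓ:ℝ) + 1 - 2 * (i:ℝ)) ^ k) * hcr
    rw [Finset.sum_congr rfl hterm, ← Finset.mul_sum, TB]
  have hmaster : TB (k+1) (ℓ+1)
      = (2 * (ℓ:ℝ) + 3) * (∑ j ∈ range (ℓ+2), (-1:ℝ)^j * ((k+2).choose j : ℝ) * y j ^ k)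
        - 2 * (∑ j ∈ range (ℓ+2), (-1:ℝ)^j * (j:ℝ) * ((k+2).choose j : ℝ) * y j ^ k) := by
    rw [TB, Finset.mul_sum, Finset.mul_sum, ← Finset.sum_sub_distrib]
    refine Finset.sum_congr (by norm_num) (fun j _ => ?_)
    simp only [hy]
    push_cast
    ring
  rw [hmaster, hstepA, hstepB]
  ring

lemma E_eq_TB : ∀ k ℓ : ℕ, (eulerianBNum k ℓ : ℝ) = TB k ℓ := by
  intro k
  induction k with
  | zero =>
    intro ℓ
    cases ℓ with
    | zero => rw [E_zero_zero, TB_zero]; norm_num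
    | succ m => rw [E_gt 0 (m+1) (by omega), TB_zero_succ]; norm_num
  | succ k ih =>
    intro ℓ
    cases ℓ with
    | zero =>
      rw [E_zero_succ, ih 0, TB_zero, TB_zero]
    | succ m =>
      rw [E_rec k m, TB_rec k m]
      by_cases h : m ≤ k
      · push_cast [Nat.cast_sub (by omega : 2 * m ≤ 2 * k + 1)]
        rw [ih (m+1), ih m]
        try ring
      · have h1 : eulerianBNum k m = 0 := E_gt k m (by omega)
        have h2 : eulerianBNum k (m+1) = 0 := E_gt k (m+1) (by omega)
        have h3 : TB k m = 0 := by rw [← ih m, h1]; norm_num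
        have h4 : TB k (m+1) = 0 := by rw [← ih (m+1), h2]; norm_num
        rw [h1, h2, h3, h4]
        norm_num

noncomputable def UB (k n : ℕ) : ℝ :=
  ∑ j ∈ range (n + 1), (-1 : ℝ) ^ j * (k.choose j : ℝ) * (2 * (n:ℝ) + 1 - 2 * j) ^ k

lemma UB_zero (k : ℕ) : UB k 0 = 1 := by
  simp [UB]

lemma TB_eq_UB_succ (k m : ℕ) : TB k (m+1) = UB k (m+1) - UB k m := by
  have key : TB k (m+1) - UB k (m+1) = - UB k m := by
    rw [TB, UB, ← Finset.sum_sub_distrib]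
    have hsplit : ∀ j ∈ range (m+2),
        (-1:ℝ)^j * ((k+1).choose j : ℝ) * (2 * ((m:ℝ)+1) + 1 - 2 * j) ^ k
          - (-1:ℝ)^j * (k.choose j : ℝ) * (2 * ((m:ℝ)+1) + 1 - 2 * j) ^ k
        = (-1:ℝ)^j * (((k+1).choose j : ℝ) - (k.choose j : ℝ))
            * (2 * ((m:ℝ)+1) + 1 - 2 * j) ^ k := by
      intro j _; ring
    have hcast : ∀ j ∈ range (m+1+1),
        (-1:ℝ)^j * ((k+1).choose j : ℝ) * (2 * ((m+1 : ℕ):ℝ) + 1 - 2 * j) ^ k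
          - (-1:ℝ)^j * (k.choose j : ℝ) * (2 * ((m+1 : ℕ):ℝ) + 1 - 2 * j) ^ k
        = (-1:ℝ)^j * (((k+1).choose j : ℝ) - (k.choose j : ℝ))
            * (2 * ((m:ℝ)+1) + 1 - 2 * j) ^ k := by
      intro j hj
      push_cast
      ring
    rw [Finset.sum_congr rfl hcast, sum_shift _ _ (by simp)]
    have hterm : ∀ i ∈ range (m+1),
        (-1:ℝ)^(i+1) * (((k+1).choose (i+1) : ℝ) - (k.choose (i+1) : ℝ))
            * (2 * ((m:ℝ)+1) + 1 - 2 * ((i:ℝ)+1)) ^ k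
        = -((-1:ℝ)^i * (k.choose i : ℝ) * (2 * (m:ℝ) + 1 - 2 * i) ^ k) := by
      intro i _
      have hc : (k+1).choose (i+1) = k.choose i + k.choose (i+1) := Nat.choose_succ_succ k i
      rw [hc]
      push_cast
      ring
    have hcast2 : ∀ i ∈ range (m+1),
        (-1:ℝ)^(i+1) * (((k+1).choose (i+1) : ℝ) - (k.choose (i+1) : ℝ))
            * (2 * ((m:ℝ)+1) + 1 - 2 * ((i+1 : ℕ):ℝ)) ^ k
        = -((-1:ℝ)^i * (k.choose i : ℝ) * (2 * (m:ℝ) + 1 - 2 * i) ^ k) := by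
      intro i hi
      rw [← hterm i hi]
      push_cast
      ring
    rw [Finset.sum_congr rfl hcast2, Finset.sum_neg_distrib, UB]
  linarith [key]


lemma two_pow_sum (k n : ℕ) (x : ℝ) (hx : 2 * x = 2 * (n:ℝ) + 1) :
    (2:ℝ)^k * ∑ j ∈ range (n + 1), (-1 : ℝ) ^ j * (k.choose j : ℝ) * (x - j) ^ k
      = UB k n := by
  rw [Finset.mul_sum, UB]
  refine Finset.sum_congr rfl (fun j _ => ?_)
  have h : (2 * (n:ℝ) + 1 - 2 * j) = 2 * (x - j) := by rw [← hx]; ring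
  rw [h, mul_pow]
  ring

lemma eval_plus (k ℓ : ℕ) :
    2^k * (k.factorial : ℝ) * irwinHallF k ((ℓ:ℝ) + 1/2) = UB k ℓ := by
  rw [irwinHallF, if_neg (by rw [not_lt]; positivity)]
  have hfl : ⌊(ℓ:ℝ) + 1/2⌋ = (ℓ:ℤ) := by
    rw [Int.floor_eq_iff]
    constructor
    · push_cast; linarith
    · push_cast; linarith
  rw [hfl, Int.toNat_natCast]
  have hk0 : (k.factorial : ℝ) ≠ 0 := Nat.cast_ne_zero.mpr (Nat.factorial_ne_zero k)
  rw [← two_pow_sum k ℓ ((ℓ:ℝ) + 1/2) (by ring)]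
  field_simp
lemma eval_minus (k m : ℕ) :
    2^k * (k.factorial : ℝ) * irwinHallF k (((m+1 : ℕ):ℝ) - 1/2) = UB k m := by
  rw [irwinHallF, if_neg (by rw [not_lt]; push_cast; linarith [Nat.cast_nonneg (α := ℝ) m])]
  have hfl : ⌊((m+1 : ℕ):ℝ) - 1/2⌋ = (m:ℤ) := by
    rw [Int.floor_eq_iff]
    constructor
    · push_cast; linarith
    · push_cast; linarith
  rw [hfl, Int.toNat_natCast]
  have hk0 : (k.factorial : ℝ) ≠ 0 := Nat.cast_ne_zero.mpr (Nat.factorial_ne_zero k)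
  rw [← two_pow_sum k m (((m+1 : ℕ):ℝ) - 1/2) (by push_cast; ring)]
  field_simp


/-- `⟨B_k, ℓ⟩ = 2^k · k! · (F_k(ℓ + 1/2) − F_k(ℓ − 1/2))`. -/
theorem stmt18 (k ℓ : ℕ) (hk : 1 ≤ k) (hl : ℓ ≤ k) :
    (eulerianBNum k ℓ : ℝ) =
    2 ^ k * (k.factorial : ℝ) *
      (irwinHallF k ((ℓ : ℝ) + 1 / 2) - irwinHallF k ((ℓ : ℝ) - 1 / 2)) := by
  rw [E_eq_TB, mul_sub]
  cases ℓ with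
  | zero =>
    rw [TB_zero]
    have h2 : irwinHallF k (((0:ℕ) : ℝ) - 1/2) = 0 := by
      rw [irwinHallF, if_pos (by norm_num)]
    push_cast at h2 ⊢
    rw [h2, mul_zero, sub_zero]
    have := eval_plus k 0
    push_cast at this
    rw [this, UB_zero]
  | succ m =>
    rw [TB_eq_UB_succ, ← eval_plus k (m+1), ← eval_minus k m]
    try push_cast
    try ring
end
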